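/- arXiv:1905.02519 — 8 statements merged into one kernel-verified Lean document; each statement's English description precedes it below -/
import Mathlib

section
/- Let X = ⨆_{λ∈Λ} G_λ be a multiple conjugation quandle, R a ring, and (f₁, f₂) an MCQ Alexander pair of maps f₁, f₂ : X × X → R. Then for all x, y ∈ X, the element f₁(x,y) is invertible in R, and f₁(x,y)⁻¹ = f₁(x ◁ y, y⁻¹). -/
universe u v w x u' v'

/-- The raw data of a disjoint union of "groups" `G l` (with multiplication `mul`,
identity `one` and inversion `inv` on each component) together with a binary
operation `op` on the disjoint union `Σ l, G l`. -/
structure MCQData (Λ : Type u) (G : Λ → Type v) where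
  mul : ∀ l : Λ, G l → G l → G l
  one : ∀ l : Λ, G l
  inv : ∀ l : Λ, G l → G l
  op  : (Σ l, G l) → (Σ l, G l) → (Σ l, G l)

namespace MCQData

variable {Λ : Type u} {G : Λ → Type v}

/-- Each component `G l` is a group with respect to the given data. -/
def IsGroupData (D : MCQData Λ G) : Prop :=
  (∀ (l : Λ) (a b c : G l), D.mul l (D.mul l a b) c = D.mul l a (D.mul l b c)) ∧
  (∀ (l : Λ) (a : G l), D.mul l (D.one l) a = a) ∧
  (∀ (l : Λ) (a : G l), D.mul l a (D.one l) = a) ∧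
  (∀ (l : Λ) (a : G l), D.mul l (D.inv l a) a = D.one l) ∧
  (∀ (l : Λ) (a : G l), D.mul l a (D.inv l a) = D.one l)

/-- `D` is a multiple conjugation quandle (MCQ): each component is a group,
the operation restricts to conjugation on each component, and the axioms of an
MCQ hold.  In the last axiom, `a ◁ x` and `b ◁ x` lie in a common component
`G m` and `(ab) ◁ x = (a ◁ x)(b ◁ x)` there. -/
def IsMCQ (D : MCQData Λ G) : Prop :=
  D.IsGroupData ∧
  (∀ (l : Λ) (a b : G l),
    D.op ⟨l, a⟩ ⟨l, b⟩ = ⟨l, D.mul l (D.mul l (D.inv l b) a) b⟩) ∧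
  (∀ (x : Σ l, G l) (l : Λ), D.op x ⟨l, D.one l⟩ = x) ∧
  (∀ (x : Σ l, G l) (l : Λ) (a b : G l),
    D.op x ⟨l, D.mul l a b⟩ = D.op (D.op x ⟨l, a⟩) ⟨l, b⟩) ∧
  (∀ x y z : Σ l, G l, D.op (D.op x y) z = D.op (D.op x z) (D.op y z)) ∧
  (∀ (l : Λ) (a b : G l) (x : Σ l, G l), ∃ (m : Λ) (a' b' : G m),
    D.op ⟨l, a⟩ x = ⟨m, a'⟩ ∧ D.op ⟨l, b⟩ x = ⟨m, b'⟩ ∧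
    D.op ⟨l, D.mul l a b⟩ x = ⟨m, D.mul m a' b'⟩)

/-- `(f₁, f₂)` is an MCQ Alexander pair for the MCQ `D` with values in the ring `R`. -/
def IsMCQAlexanderPair (D : MCQData Λ G) {R : Type w} [Ring R]
    (f₁ f₂ : (Σ l, G l) → (Σ l, G l) → R) : Prop :=
  (∀ (l : Λ) (a b : G l),
    f₁ ⟨l, a⟩ ⟨l, b⟩ + f₂ ⟨l, a⟩ ⟨l, b⟩ = f₁ ⟨l, a⟩ ⟨l, D.mul l (D.inv l a) b⟩) ∧
  (∀ (l : Λ) (a b : G l) (x : Σ l, G l), f₁ ⟨l, a⟩ x = f₁ ⟨l, b⟩ x) ∧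
  (∀ (l : Λ) (a b : G l) (x : Σ l, G l),
    f₂ ⟨l, D.mul l a b⟩ x =
      f₂ ⟨l, a⟩ x + f₁ (D.op ⟨l, b⟩ x) (D.op ⟨l, D.inv l a⟩ x) * f₂ ⟨l, b⟩ x) ∧
  (∀ (x : Σ l, G l) (l : Λ), f₁ x ⟨l, D.one l⟩ = 1) ∧
  (∀ (x : Σ l, G l) (l : Λ) (a b : G l),
    f₁ x ⟨l, D.mul l a b⟩ = f₁ (D.op x ⟨l, a⟩) ⟨l, b⟩ * f₁ x ⟨l, a⟩) ∧
  (∀ (x : Σ l, G l) (l : Λ) (a b : G l),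
    f₂ x ⟨l, D.mul l a b⟩ = f₁ (D.op x ⟨l, a⟩) ⟨l, b⟩ * f₂ x ⟨l, a⟩) ∧
  (∀ x y z : Σ l, G l, f₁ (D.op x y) z * f₁ x y = f₁ (D.op x z) (D.op y z) * f₁ x z) ∧
  (∀ x y z : Σ l, G l, f₁ (D.op x y) z * f₂ x y = f₂ (D.op x z) (D.op y z) * f₁ y z) ∧
  (∀ x y z : Σ l, G l, f₂ (D.op x y) z =
    f₁ (D.op x z) (D.op y z) * f₂ x z + f₂ (D.op x z) (D.op y z) * f₂ y z)

/-- An MCQ homomorphism: `φ` preserves the operation `◁`, and for `a, b` in a common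
component, `φ a`, `φ b` lie in a common component and `φ (ab) = (φ a)(φ b)`. -/
def IsMCQHom {Λ' : Type u'} {G' : Λ' → Type v'} (D : MCQData Λ G)
    (D' : MCQData Λ' G') (φ : (Σ l, G l) → (Σ l', G' l')) : Prop :=
  (∀ x y : Σ l, G l, φ (D.op x y) = D'.op (φ x) (φ y)) ∧
  (∀ (l : Λ) (a b : G l), ∃ (m : Λ') (a' b' : G' m),
    φ ⟨l, a⟩ = ⟨m, a'⟩ ∧ φ ⟨l, b⟩ = ⟨m, b'⟩ ∧
    φ ⟨l, D.mul l a b⟩ = ⟨m, D'.mul m a' b'⟩)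

/-- Conditions (0-i)--(0-iv) for the maps `f₃, f₄ : ⨆ (G l × G l) → R`. -/
def Conds0 (D : MCQData Λ G) {R : Type w} [Ring R]
    (f₃ f₄ : ∀ l : Λ, G l → G l → R) : Prop :=
  (∀ (l : Λ) (a b : G l), IsUnit (f₃ l a b) ∧ IsUnit (f₄ l a b)) ∧
  (∀ (l : Λ) (a b c : G l), f₃ l (D.mul l a b) c * f₃ l a b = f₃ l a (D.mul l b c)) ∧
  (∀ (l : Λ) (a b c : G l),
    f₃ l (D.mul l a b) c * f₄ l a b = f₄ l a (D.mul l b c) * f₃ l b c) ∧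
  (∀ (l : Λ) (a b c : G l), f₄ l (D.mul l a b) c = f₄ l a (D.mul l b c) * f₄ l b c)

/-- Conditions (0-i)--(4-iii) for the quadruple `(f₁, f₂, f₃, f₄)`.
In conditions (4-i)--(4-iii), the decompositions `a ◁ x = ⟨m, a'⟩` and
`b ◁ x = ⟨m, b'⟩` express that `a ◁ x` and `b ◁ x` lie in a common component `G m`. -/
def Conds (D : MCQData Λ G) {R : Type w} [Ring R]
    (f₁ f₂ : (Σ l, G l) → (Σ l, G l) → R) (f₃ f₄ : ∀ l : Λ, G l → G l → R) : Prop :=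
  Conds0 D f₃ f₄ ∧
  (∀ (l : Λ) (a b : G l),
    f₁ ⟨l, a⟩ ⟨l, b⟩ = f₄ l (D.inv l b) (D.mul l a b) * f₃ l a b) ∧
  (∀ (l : Λ) (a b : G l),
    f₂ ⟨l, a⟩ ⟨l, b⟩ =
      -(f₃ l (D.inv l b) (D.mul l a b) * f₄ l (D.inv l b) (D.one l) * f₃ l b (D.inv l b)) +
        f₄ l (D.inv l b) (D.mul l a b) * f₄ l a b) ∧
  (∀ (x : Σ l, G l) (l : Λ), f₁ x ⟨l, D.one l⟩ = 1) ∧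
  (∀ (x : Σ l, G l) (l : Λ) (a b : G l),
    f₁ x ⟨l, D.mul l a b⟩ = f₁ (D.op x ⟨l, a⟩) ⟨l, b⟩ * f₁ x ⟨l, a⟩) ∧
  (∀ (x : Σ l, G l) (l : Λ) (a b : G l),
    f₂ x ⟨l, D.mul l a b⟩ * f₃ l a b = f₁ (D.op x ⟨l, a⟩) ⟨l, b⟩ * f₂ x ⟨l, a⟩) ∧
  (∀ (x : Σ l, G l) (l : Λ) (a b : G l),
    f₂ x ⟨l, D.mul l a b⟩ * f₄ l a b = f₂ (D.op x ⟨l, a⟩) ⟨l, b⟩) ∧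
  (∀ x y z : Σ l, G l, f₁ (D.op x y) z * f₁ x y = f₁ (D.op x z) (D.op y z) * f₁ x z) ∧
  (∀ x y z : Σ l, G l, f₁ (D.op x y) z * f₂ x y = f₂ (D.op x z) (D.op y z) * f₁ y z) ∧
  (∀ x y z : Σ l, G l, f₂ (D.op x y) z =
    f₁ (D.op x z) (D.op y z) * f₂ x z + f₂ (D.op x z) (D.op y z) * f₂ y z) ∧
  (∀ (l : Λ) (a b : G l) (x : Σ l, G l) (m : Λ) (a' b' : G m),
    D.op ⟨l, a⟩ x = ⟨m, a'⟩ → D.op ⟨l, b⟩ x = ⟨m, b'⟩ →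
      f₁ ⟨l, D.mul l a b⟩ x * f₃ l a b = f₃ m a' b' * f₁ ⟨l, a⟩ x) ∧
  (∀ (l : Λ) (a b : G l) (x : Σ l, G l) (m : Λ) (a' b' : G m),
    D.op ⟨l, a⟩ x = ⟨m, a'⟩ → D.op ⟨l, b⟩ x = ⟨m, b'⟩ →
      f₁ ⟨l, D.mul l a b⟩ x * f₄ l a b = f₄ m a' b' * f₁ ⟨l, b⟩ x) ∧
  (∀ (l : Λ) (a b : G l) (x : Σ l, G l) (m : Λ) (a' b' : G m),
    D.op ⟨l, a⟩ x = ⟨m, a'⟩ → D.op ⟨l, b⟩ x = ⟨m, b'⟩ →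
      f₂ ⟨l, D.mul l a b⟩ x = f₃ m a' b' * f₂ ⟨l, a⟩ x + f₄ m a' b' * f₂ ⟨l, b⟩ x)

/-- The multiplication `(a,u)(b,v) = (ab, f₃(a,b)u + f₄(a,b)v)` on `G l × M`. -/
def quadMul (D : MCQData Λ G) {R : Type w} [Ring R] (f₃ f₄ : ∀ l : Λ, G l → G l → R)
    (M : Type x) [AddCommGroup M] [Module R M] (l : Λ) (p q : G l × M) : G l × M :=
  (D.mul l p.1 q.1, f₃ l p.1 q.1 • p.2 + f₄ l p.1 q.1 • q.2)

/-- The operation `(x,u) ◁ (y,v) = (x ◁ y, f₁(x,y)u + f₂(x,y)v)` on `⨆ (G l × M)`. -/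
def quadOp (D : MCQData Λ G) {R : Type w} [Ring R]
    (f₁ f₂ : (Σ l, G l) → (Σ l, G l) → R) (M : Type x) [AddCommGroup M] [Module R M]
    (z w : Σ l, G l × M) : Σ l, G l × M :=
  ⟨(D.op ⟨z.1, z.2.1⟩ ⟨w.1, w.2.1⟩).1,
    ((D.op ⟨z.1, z.2.1⟩ ⟨w.1, w.2.1⟩).2,
      f₁ ⟨z.1, z.2.1⟩ ⟨w.1, w.2.1⟩ • z.2.2 + f₂ ⟨z.1, z.2.1⟩ ⟨w.1, w.2.1⟩ • w.2.2)⟩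

/-- The data `X̃(f₁,f₂,f₃,f₄)` on `⨆ (G l × M)`. -/
def quadExt (D : MCQData Λ G) {R : Type w} [Ring R]
    (f₁ f₂ : (Σ l, G l) → (Σ l, G l) → R) (f₃ f₄ : ∀ l : Λ, G l → G l → R)
    (M : Type x) [AddCommGroup M] [Module R M] : MCQData Λ (fun l => G l × M) where
  mul := quadMul D f₃ f₄ M
  one l := (D.one l, 0)
  inv l p := (D.inv l p.1, -((f₄ l (D.inv l p.1) (D.one l) * f₃ l p.1 (D.inv l p.1)) • p.2))
  op := quadOp D f₁ f₂ M

/-- The multiplication `(a,u)(b,v) = (ab, u + f₁(a,a⁻¹)v)` on `G l × M`. -/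
def alexMul (D : MCQData Λ G) {R : Type w} [Ring R]
    (f₁ : (Σ l, G l) → (Σ l, G l) → R) (M : Type x) [AddCommGroup M] [Module R M]
    (l : Λ) (p q : G l × M) : G l × M :=
  (D.mul l p.1 q.1, p.2 + f₁ ⟨l, p.1⟩ ⟨l, D.inv l p.1⟩ • q.2)

/-- The data `X̃(f₁,f₂)` on `⨆ (G l × M)`, with identity `(e_l, 0)` and
inverse `(a,u)⁻¹ = (a⁻¹, -f₁(a,a)u)` on each component. -/
def alexExt (D : MCQData Λ G) {R : Type w} [Ring R]
    (f₁ f₂ : (Σ l, G l) → (Σ l, G l) → R) (M : Type x) [AddCommGroup M] [Module R M] :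
    MCQData Λ (fun l => G l × M) where
  mul := alexMul D f₁ M
  one l := (D.one l, 0)
  inv l p := (D.inv l p.1, -(f₁ ⟨l, p.1⟩ ⟨l, p.1⟩ • p.2))
  op := quadOp D f₁ f₂ M

/-- `(m, o, i)` satisfies the group axioms on `α`. -/
def GroupAxiomsOn {α : Type x} (m : α → α → α) (o : α) (i : α → α) : Prop :=
  (∀ a b c : α, m (m a b) c = m a (m b c)) ∧ (∀ a : α, m o a = a) ∧ (∀ a : α, m a o = a) ∧
  (∀ a : α, m (i a) a = o) ∧ (∀ a : α, m a (i a) = o)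

/-- The relation `(f₁,f₂,f₃,f₄) ∼ (g₁,g₂,g₃,g₄)`, witnessed by a map `h : X → Rˣ`. -/
def QuadRel (D : MCQData Λ G) {R : Type w} [Ring R]
    (f₁ f₂ g₁ g₂ : (Σ l, G l) → (Σ l, G l) → R)
    (f₃ f₄ g₃ g₄ : ∀ l : Λ, G l → G l → R) : Prop :=
  ∃ h : (Σ l, G l) → Rˣ,
    (∀ x y : Σ l, G l, (h (D.op x y) : R) * f₁ x y = g₁ x y * (h x : R)) ∧
    (∀ x y : Σ l, G l, (h (D.op x y) : R) * f₂ x y = g₂ x y * (h y : R)) ∧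
    (∀ (l : Λ) (a b : G l),
      (h ⟨l, D.mul l a b⟩ : R) * f₃ l a b = g₃ l a b * (h ⟨l, a⟩ : R)) ∧
    (∀ (l : Λ) (a b : G l),
      (h ⟨l, D.mul l a b⟩ : R) * f₄ l a b = g₄ l a b * (h ⟨l, b⟩ : R))

end MCQData

/-- for an MCQ Alexander pair `(f₁, f₂)`, the element `f₁(x,y)` is
invertible with inverse `f₁(x ◁ y, y⁻¹)`. -/
theorem alexander_pair_f1_invertible {Λ : Type u} {G : Λ → Type v} {R : Type w} [Ring R]
    (D : MCQData Λ G) (hD : D.IsMCQ)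
    (f₁ f₂ : (Σ l, G l) → (Σ l, G l) → R) (hf : D.IsMCQAlexanderPair f₁ f₂) :
    ∀ (x : Σ l, G l) (l : Λ) (b : G l),
      IsUnit (f₁ x ⟨l, b⟩) ∧
      f₁ x ⟨l, b⟩ * f₁ (D.op x ⟨l, b⟩) ⟨l, D.inv l b⟩ = 1 ∧
      f₁ (D.op x ⟨l, b⟩) ⟨l, D.inv l b⟩ * f₁ x ⟨l, b⟩ = 1 := by
  obtain ⟨⟨hassoc, hone_l, hone_r, hinv_l, hinv_r⟩, hconj, hop_one, hop_mul, hdist, hcomp⟩ := hD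
  obtain ⟨h1, h2, h3, h4, h5, h6, h7, h8, h9⟩ := hf
  intro x l b
  have key1 : f₁ (D.op x ⟨l, b⟩) ⟨l, D.inv l b⟩ * f₁ x ⟨l, b⟩ = 1 := by
    have h := h5 x l b (D.inv l b)
    rw [hinv_r, h4] at h
    exact h.symm
  have heq : D.op (D.op x ⟨l, b⟩) ⟨l, D.inv l b⟩ = x := by
    rw [← hop_mul, hinv_r, hop_one]
  have key2 : f₁ x ⟨l, b⟩ * f₁ (D.op x ⟨l, b⟩) ⟨l, D.inv l b⟩ = 1 := by
    have h := h5 (D.op x ⟨l, b⟩) l (D.inv l b) b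
    rw [hinv_l, h4, heq] at h
    exact h.symm
  exact ⟨⟨⟨f₁ x ⟨l, b⟩, f₁ (D.op x ⟨l, b⟩) ⟨l, D.inv l b⟩, key2, key1⟩, rfl⟩, key2, key1⟩
end

section
/- Let X = ⨆_{λ∈Λ} G_λ be a multiple conjugation quandle, R a ring, and (f₁, f₂) an MCQ Alexander pair of maps f₁, f₂ : X × X → R. Then for all λ ∈ Λ, all a, b ∈ G_λ and all x ∈ X, f₁(ab, x) f₁(a, a⁻¹) = f₁(b ◁ x, a⁻¹ ◁ x) f₁(b, x). -/
universe u v w x u' v'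

/-- for an MCQ Alexander pair `(f₁, f₂)`,
`f₁(ab, x) f₁(a, a⁻¹) = f₁(b ◁ x, a⁻¹ ◁ x) f₁(b, x)`. -/
theorem alexander_pair_f1_mul {Λ : Type u} {G : Λ → Type v} {R : Type w} [Ring R]
    (D : MCQData Λ G) (hD : D.IsMCQ)
    (f₁ f₂ : (Σ l, G l) → (Σ l, G l) → R) (hf : D.IsMCQAlexanderPair f₁ f₂) :
    ∀ (l : Λ) (a b : G l) (x : Σ l, G l),
      f₁ ⟨l, D.mul l a b⟩ x * f₁ ⟨l, a⟩ ⟨l, D.inv l a⟩ =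
        f₁ (D.op ⟨l, b⟩ x) (D.op ⟨l, D.inv l a⟩ x) * f₁ ⟨l, b⟩ x := by
  intro l a b x
  obtain ⟨h1, h2, h3, h4, h5, h6, h7, h8, h9⟩ := hf
  have key := h7 ⟨l, b⟩ ⟨l, D.inv l a⟩ x
  rw [hD.2.1 l b (D.inv l a)] at key
  rw [h2 l _ (D.mul l a b) x, h2 l b a ⟨l, D.inv l a⟩] at key
  exact key
end

section
/- Let X = ⨆_{λ∈Λ} G_λ be a multiple conjugation quandle, R a ring, and (f₁, f₂) an MCQ Alexander pair of maps f₁, f₂ : X × X → R. Then for all λ ∈ Λ, all a, b ∈ G_λ and all x ∈ X, f₂(x ◁ a, b) = f₂(x, ab) f₁(a, a⁻¹). -/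
universe u v w x u' v'

/-- for an MCQ Alexander pair `(f₁, f₂)`,
`f₂(x ◁ a, b) = f₂(x, ab) f₁(a, a⁻¹)`. -/
theorem alexander_pair_f2_op {Λ : Type u} {G : Λ → Type v} {R : Type w} [Ring R]
    (D : MCQData Λ G) (hD : D.IsMCQ)
    (f₁ f₂ : (Σ l, G l) → (Σ l, G l) → R) (hf : D.IsMCQAlexanderPair f₁ f₂) :
    ∀ (l : Λ) (a b : G l) (x : Σ l, G l),
      f₂ (D.op x ⟨l, a⟩) ⟨l, b⟩ = f₂ x ⟨l, D.mul l a b⟩ * f₁ ⟨l, a⟩ ⟨l, D.inv l a⟩ := by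
  obtain ⟨⟨hassoc, hone_mul, hmul_one, hinv_mul, hmul_inv⟩, hconj, hop_one, hop_mul,
    hdist, hcomp⟩ := hD
  obtain ⟨h1, h2, h3, h4, h5, h6, h7, h8, h9⟩ := hf
  intro l a b x
  -- f₁(x◁a, a⁻¹) * f₁(x, a) = 1
  have cancelA : ∀ (x : Σ l, G l) (l : Λ) (a : G l),
      f₁ (D.op x ⟨l, a⟩) ⟨l, D.inv l a⟩ * f₁ x ⟨l, a⟩ = 1 := by
    intro x l a
    have h := h5 x l a (D.inv l a)
    rw [hmul_inv, h4] at h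
    exact h.symm
  -- f₁(a,a) * f₁(a,a⁻¹) = 1
  have lemB : ∀ (l : Λ) (a : G l),
      f₁ ⟨l, a⟩ ⟨l, a⟩ * f₁ ⟨l, a⟩ ⟨l, D.inv l a⟩ = 1 := by
    intro l a
    have h := h5 (⟨l, a⟩ : Σ l, G l) l (D.inv l a) a
    rw [hinv_mul, h4, hconj,
      h2 l (D.mul l (D.mul l (D.inv l (D.inv l a)) a) (D.inv l a)) a ⟨l, a⟩] at h
    exact h.symm
  -- a⁻¹ (ab) a = ba
  have key : D.mul l (D.mul l (D.inv l a) (D.mul l a b)) a = D.mul l b a := by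
    rw [← hassoc, hinv_mul, hone_mul]
  -- f₂(x, ab) = f₂(x◁a, b) * f₁(a,a)
  have main : f₂ x ⟨l, D.mul l a b⟩ = f₂ (D.op x ⟨l, a⟩) ⟨l, b⟩ * f₁ ⟨l, a⟩ ⟨l, a⟩ := by
    have h := h8 x ⟨l, D.mul l a b⟩ ⟨l, a⟩
    rw [hconj l (D.mul l a b) a, key, h6 (D.op x ⟨l, a⟩) l b a,
      hop_mul x l a b, h2 l (D.mul l a b) a ⟨l, a⟩] at h
    have hc := cancelA (D.op (D.op x ⟨l, a⟩) ⟨l, b⟩) l a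
    calc f₂ x ⟨l, D.mul l a b⟩
        = (f₁ (D.op (D.op (D.op x ⟨l, a⟩) ⟨l, b⟩) ⟨l, a⟩) ⟨l, D.inv l a⟩ *
            f₁ (D.op (D.op x ⟨l, a⟩) ⟨l, b⟩) ⟨l, a⟩) * f₂ x ⟨l, D.mul l a b⟩ := by
          rw [hc, one_mul]
      _ = f₁ (D.op (D.op (D.op x ⟨l, a⟩) ⟨l, b⟩) ⟨l, a⟩) ⟨l, D.inv l a⟩ *
            (f₁ (D.op (D.op x ⟨l, a⟩) ⟨l, b⟩) ⟨l, a⟩ * f₂ x ⟨l, D.mul l a b⟩) := by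
          rw [mul_assoc]
      _ = f₁ (D.op (D.op (D.op x ⟨l, a⟩) ⟨l, b⟩) ⟨l, a⟩) ⟨l, D.inv l a⟩ *
            (f₁ (D.op (D.op x ⟨l, a⟩) ⟨l, b⟩) ⟨l, a⟩ *
              f₂ (D.op x ⟨l, a⟩) ⟨l, b⟩ * f₁ ⟨l, a⟩ ⟨l, a⟩) := by rw [h]
      _ = (f₁ (D.op (D.op (D.op x ⟨l, a⟩) ⟨l, b⟩) ⟨l, a⟩) ⟨l, D.inv l a⟩ *
            f₁ (D.op (D.op x ⟨l, a⟩) ⟨l, b⟩) ⟨l, a⟩) *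
              (f₂ (D.op x ⟨l, a⟩) ⟨l, b⟩ * f₁ ⟨l, a⟩ ⟨l, a⟩) := by simp only [mul_assoc]
      _ = f₂ (D.op x ⟨l, a⟩) ⟨l, b⟩ * f₁ ⟨l, a⟩ ⟨l, a⟩ := by rw [hc, one_mul]
  rw [main, mul_assoc, lemB, mul_one]
end

section
/- Let X = ⨆_{λ∈Λ} G_λ be a multiple conjugation quandle, R a ring, and (f₁, f₂) an MCQ Alexander pair of maps f₁, f₂ : X × X → R. Then for every left R-module M, the set X̃(f₁,f₂) = ⨆_{λ∈Λ} (G_λ × M) with operations (x,u) ◁ (y,v) = (x ◁ y, f₁(x,y)u + f₂(x,y)v) and, on each G_λ × M, (a,u)(b,v) = (ab, u + f₁(a,a⁻¹)v), is a multiple conjugation quandle; moreover the identity of G_λ × M is (e_λ, 0) and the inverse of (a,u) is (a⁻¹, −f₁(a,a)u). -/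
universe u v w x u' v'

/-- Helper: congruence for elements of `Σ l, G l × M`. -/
theorem MCQData.mkpair_eq {Λ : Type u} {G : Λ → Type v} {M : Type x}
    {s t : Σ l, G l} (h : s = t) {u v : M} (hu : u = v) :
    (⟨s.1, (s.2, u)⟩ : Σ l, G l × M) = ⟨t.1, (t.2, v)⟩ := by
  subst h; subst hu; rfl

/-- Helper: second components of equal dependent pairs with the same index agree. -/
theorem MCQData.sig_snd {Λ : Type u} {G : Λ → Type v} {m : Λ} {a b : G m}
    (h : (⟨m, a⟩ : Σ l, G l) = ⟨m, b⟩) : a = b := by injection h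

/-- for an MCQ Alexander pair `(f₁, f₂)` and any left `R`-module `M`,
`X̃(f₁,f₂) = ⨆ (G l × M)` with `(x,u) ◁ (y,v) = (x ◁ y, f₁(x,y)u + f₂(x,y)v)` and
`(a,u)(b,v) = (ab, u + f₁(a,a⁻¹)v)` is an MCQ; its data includes the identity
`(e_λ, 0)` and the inverse `(a,u)⁻¹ = (a⁻¹, -f₁(a,a)u)` on each component. -/
theorem alexander_pair_gives_mcq {Λ : Type u} {G : Λ → Type v} {R : Type w} [Ring R]
    (D : MCQData Λ G) (hD : D.IsMCQ)
    (f₁ f₂ : (Σ l, G l) → (Σ l, G l) → R) (hf : D.IsMCQAlexanderPair f₁ f₂)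
    (M : Type x) [AddCommGroup M] [Module R M] :
    (MCQData.alexExt D f₁ f₂ M).IsMCQ := by
  obtain ⟨⟨massoc, monel, moner, minvl, minvr⟩, hconj, hopone, hopmul, hdist, hcomm⟩ := hD
  obtain ⟨hA1, hA2, hA3, hA4, hA5, hA6, hA7, hA8, hA9⟩ := hf
  -- derived group facts
  have mic : ∀ (l : Λ) (a b : G l), D.mul l (D.inv l a) (D.mul l a b) = b := by
    intro l a b; rw [← massoc, minvl, monel]
  have inv_uniq : ∀ (l : Λ) (a b : G l), D.mul l a b = D.one l → b = D.inv l a := by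
    intro l a b h
    have h' := congrArg (D.mul l (D.inv l a)) h
    rwa [mic, moner] at h'
  have inv_one : ∀ l : Λ, D.inv l (D.one l) = D.one l := by
    intro l; exact (inv_uniq l _ _ (monel l _)).symm
  have inv_inv : ∀ (l : Λ) (a : G l), D.inv l (D.inv l a) = a := by
    intro l a; exact (inv_uniq l _ _ (minvl l a)).symm
  have inv_mul : ∀ (l : Λ) (a b : G l),
      D.inv l (D.mul l a b) = D.mul l (D.inv l b) (D.inv l a) := by
    intro l a b
    refine (inv_uniq l _ _ ?_).symm
    rw [massoc, ← massoc l b, minvr, monel, minvr]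
  -- f₁ lemmas
  have Fmul : ∀ (l : Λ) (c a b : G l),
      f₁ ⟨l, c⟩ ⟨l, D.mul l a b⟩ = f₁ ⟨l, c⟩ ⟨l, b⟩ * f₁ ⟨l, c⟩ ⟨l, a⟩ := by
    intro l c a b
    rw [hA5 ⟨l, c⟩ l a b, hconj l c a, hA2 l (D.mul l (D.mul l (D.inv l a) c) a) c ⟨l, b⟩]
  have Finv : ∀ (l : Λ) (c a : G l),
      f₁ ⟨l, c⟩ ⟨l, a⟩ * f₁ ⟨l, c⟩ ⟨l, D.inv l a⟩ = 1 := by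
    intro l c a
    have h := Fmul l c (D.inv l a) a
    rw [minvl, hA4] at h; exact h.symm
  have Finv' : ∀ (l : Λ) (c a : G l),
      f₁ ⟨l, c⟩ ⟨l, D.inv l a⟩ * f₁ ⟨l, c⟩ ⟨l, a⟩ = 1 := by
    intro l c a
    have h := Fmul l c a (D.inv l a)
    rw [minvr, hA4] at h; exact h.symm
  -- `e ◁ x` is the identity of its component
  have op_one_comp : ∀ (l : Λ) (x : Σ l, G l), ∃ m : Λ,
      D.op ⟨l, D.one l⟩ x = ⟨m, D.one m⟩ := by
    intro l x
    obtain ⟨m, p, q, h1, h2, h3⟩ := hcomm l (D.one l) (D.one l) x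
    have hpq : p = q := MCQData.sig_snd (h1.symm.trans h2)
    rw [monel l (D.one l)] at h3
    have hp : p = D.mul m p p := by
      have h' := MCQData.sig_snd (h1.symm.trans h3)
      rw [← hpq] at h'; exact h'
    have hone : D.one m = p :=
      calc D.one m = D.mul m (D.inv m p) p := (minvl m p).symm
        _ = D.mul m (D.inv m p) (D.mul m p p) := by rw [← hp]
        _ = p := mic m p p
    exact ⟨m, by rw [h1, hone]⟩
  -- `(inv a) ◁ x` is the inverse of `a ◁ x`
  have op_inv : ∀ (l : Λ) (a : G l) (x : Σ l, G l) (m : Λ) (a' : G m),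
      D.op ⟨l, a⟩ x = ⟨m, a'⟩ → D.op ⟨l, D.inv l a⟩ x = ⟨m, D.inv m a'⟩ := by
    intro l a x m a' h
    obtain ⟨m₂, p, q, h1, h2, h3⟩ := hcomm l a (D.inv l a) x
    have hm : m₂ = m := congrArg Sigma.fst (h1.symm.trans h)
    subst hm
    have hp : p = a' := MCQData.sig_snd (h1.symm.trans h)
    subst hp
    rw [minvr l a] at h3
    obtain ⟨m₃, h4⟩ := op_one_comp l x
    have hm3 : m₃ = m₂ := congrArg Sigma.fst (h4.symm.trans h3)
    subst hm3
    have hq : q = D.inv m₃ p := by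
      refine inv_uniq m₃ p q ?_
      exact (MCQData.sig_snd (h4.symm.trans h3)).symm
    rw [h2, hq]
  -- key lemma: f₂ (x ◁ a) b = f₂ x (ab) * f₁ a a⁻¹
  have L4 : ∀ (x : Σ l, G l) (l : Λ) (a b : G l),
      f₂ (D.op x ⟨l, a⟩) ⟨l, b⟩ = f₂ x ⟨l, D.mul l a b⟩ * f₁ ⟨l, a⟩ ⟨l, D.inv l a⟩ := by
    intro x l a b
    have hgrp : D.mul l (D.mul l (D.inv l a) (D.mul l (D.mul l a b) (D.inv l a))) a = b := by
      rw [← massoc l (D.inv l a), mic, massoc, minvl, moner]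
    have h8 := hA8 x ⟨l, D.mul l (D.mul l a b) (D.inv l a)⟩ ⟨l, a⟩
    rw [hconj l (D.mul l (D.mul l a b) (D.inv l a)) a, hgrp,
      hA2 l (D.mul l (D.mul l a b) (D.inv l a)) a ⟨l, a⟩] at h8
    have hy2 : f₂ x ⟨l, D.mul l (D.mul l a b) (D.inv l a)⟩ =
        f₁ (D.op x ⟨l, D.mul l a b⟩) ⟨l, D.inv l a⟩ * f₂ x ⟨l, D.mul l a b⟩ :=
      hA6 x l (D.mul l a b) (D.inv l a)
    have hone1 : f₁ (D.op x ⟨l, D.mul l (D.mul l a b) (D.inv l a)⟩) ⟨l, a⟩ *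
        f₁ (D.op x ⟨l, D.mul l a b⟩) ⟨l, D.inv l a⟩ = 1 := by
      have h5 := hA5 (D.op x ⟨l, D.mul l a b⟩) l (D.inv l a) a
      rw [minvl l a, hA4, ← hopmul x l (D.mul l a b) (D.inv l a)] at h5
      exact h5.symm
    calc f₂ (D.op x ⟨l, a⟩) ⟨l, b⟩
        = f₂ (D.op x ⟨l, a⟩) ⟨l, b⟩ * (f₁ ⟨l, a⟩ ⟨l, a⟩ * f₁ ⟨l, a⟩ ⟨l, D.inv l a⟩) := by
          rw [Finv l a a, mul_one]
      _ = (f₂ (D.op x ⟨l, a⟩) ⟨l, b⟩ * f₁ ⟨l, a⟩ ⟨l, a⟩) * f₁ ⟨l, a⟩ ⟨l, D.inv l a⟩ :=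
          (mul_assoc _ _ _).symm
      _ = (f₁ (D.op x ⟨l, D.mul l (D.mul l a b) (D.inv l a)⟩) ⟨l, a⟩ *
            f₂ x ⟨l, D.mul l (D.mul l a b) (D.inv l a)⟩) * f₁ ⟨l, a⟩ ⟨l, D.inv l a⟩ := by
          rw [h8]
      _ = f₂ x ⟨l, D.mul l a b⟩ * f₁ ⟨l, a⟩ ⟨l, D.inv l a⟩ := by
          rw [hy2, ← mul_assoc, hone1, one_mul]
  -- key lemma for the last axiom
  have L7 : ∀ (l : Λ) (a b : G l) (x : Σ l, G l) (m : Λ) (a' : G m),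
      D.op ⟨l, a⟩ x = ⟨m, a'⟩ →
      f₁ ⟨l, b⟩ x * f₁ ⟨l, a⟩ ⟨l, D.inv l a⟩ =
        f₁ ⟨m, a'⟩ ⟨m, D.inv m a'⟩ * f₁ ⟨l, b⟩ x := by
    intro l a b x m a' h
    have h7 := hA7 ⟨l, a⟩ ⟨l, D.inv l a⟩ x
    rw [hconj l a (D.inv l a),
      hA2 l (D.mul l (D.mul l (D.inv l (D.inv l a)) a) (D.inv l a)) b x,
      h, op_inv l a x m a' h, hA2 l a b x] at h7
    exact h7
  refine ⟨⟨?_, ?_, ?_, ?_, ?_⟩, ?_, ?_, ?_, ?_, ?_⟩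
  · -- associativity
    rintro l ⟨a, u⟩ ⟨b, v⟩ ⟨c, w⟩
    have hS : f₁ ⟨l, D.mul l a b⟩ ⟨l, D.inv l (D.mul l a b)⟩ =
        f₁ ⟨l, a⟩ ⟨l, D.inv l a⟩ * f₁ ⟨l, b⟩ ⟨l, D.inv l b⟩ := by
      rw [inv_mul l a b, Fmul l (D.mul l a b) (D.inv l b) (D.inv l a),
        hA2 l (D.mul l a b) a ⟨l, D.inv l a⟩, hA2 l (D.mul l a b) b ⟨l, D.inv l b⟩]
    refine Prod.ext (massoc l a b c) ?_
    show (u + f₁ ⟨l, a⟩ ⟨l, D.inv l a⟩ • v) +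
        f₁ ⟨l, D.mul l a b⟩ ⟨l, D.inv l (D.mul l a b)⟩ • w =
      u + f₁ ⟨l, a⟩ ⟨l, D.inv l a⟩ • (v + f₁ ⟨l, b⟩ ⟨l, D.inv l b⟩ • w)
    rw [hS, mul_smul, smul_add, add_assoc]
  · -- left identity
    rintro l ⟨a, u⟩
    refine Prod.ext (monel l a) ?_
    show (0 : M) + f₁ ⟨l, D.one l⟩ ⟨l, D.inv l (D.one l)⟩ • u = u
    rw [inv_one l, hA4 ⟨l, D.one l⟩ l, one_smul, zero_add]
  · -- right identity
    rintro l ⟨a, u⟩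
    refine Prod.ext (moner l a) ?_
    show u + f₁ ⟨l, a⟩ ⟨l, D.inv l a⟩ • (0 : M) = u
    rw [smul_zero, add_zero]
  · -- left inverse
    rintro l ⟨a, u⟩
    refine Prod.ext (minvl l a) ?_
    show -(f₁ ⟨l, a⟩ ⟨l, a⟩ • u) + f₁ ⟨l, D.inv l a⟩ ⟨l, D.inv l (D.inv l a)⟩ • u = 0
    rw [inv_inv l a, hA2 l (D.inv l a) a ⟨l, a⟩, neg_add_cancel]
  · -- right inverse
    rintro l ⟨a, u⟩
    refine Prod.ext (minvr l a) ?_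
    show u + f₁ ⟨l, a⟩ ⟨l, D.inv l a⟩ • (-(f₁ ⟨l, a⟩ ⟨l, a⟩ • u)) = 0
    rw [smul_neg, ← mul_smul, Finv' l a a, one_smul, add_neg_cancel]
  · -- conjugation on components
    rintro l ⟨a, u⟩ ⟨b, v⟩
    have hf2 : f₂ ⟨l, a⟩ ⟨l, b⟩ =
        f₁ ⟨l, a⟩ ⟨l, D.mul l (D.inv l a) b⟩ - f₁ ⟨l, a⟩ ⟨l, b⟩ :=
      eq_sub_of_add_eq' (hA1 l a b)
    have hu : f₁ ⟨l, a⟩ ⟨l, b⟩ • u + f₂ ⟨l, a⟩ ⟨l, b⟩ • v =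
        (-(f₁ ⟨l, b⟩ ⟨l, b⟩ • v) +
          f₁ ⟨l, D.inv l b⟩ ⟨l, D.inv l (D.inv l b)⟩ • u) +
        f₁ ⟨l, D.mul l (D.inv l b) a⟩ ⟨l, D.inv l (D.mul l (D.inv l b) a)⟩ • v := by
      rw [inv_inv l b, hA2 l (D.inv l b) a ⟨l, b⟩, inv_mul l (D.inv l b) a, inv_inv l b,
        hA2 l (D.mul l (D.inv l b) a) a ⟨l, D.mul l (D.inv l a) b⟩,
        hA2 l b a ⟨l, b⟩, hf2, sub_smul]
      abel
    exact MCQData.mkpair_eq (hconj l a b) hu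
  · -- x ◁ e = x
    rintro ⟨k, c, w⟩ l
    have hu : f₁ ⟨k, c⟩ ⟨l, D.one l⟩ • w + f₂ ⟨k, c⟩ ⟨l, D.one l⟩ • (0 : M) = w := by
      rw [hA4 ⟨k, c⟩ l, one_smul, smul_zero, add_zero]
    exact MCQData.mkpair_eq (hopone ⟨k, c⟩ l) hu
  · -- x ◁ (ab) = (x ◁ a) ◁ b
    rintro ⟨k, c, u⟩ l ⟨a, v⟩ ⟨b, w⟩
    have hu : f₁ ⟨k, c⟩ ⟨l, D.mul l a b⟩ • u +
        f₂ ⟨k, c⟩ ⟨l, D.mul l a b⟩ • (v + f₁ ⟨l, a⟩ ⟨l, D.inv l a⟩ • w) =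
        f₁ (D.op ⟨k, c⟩ ⟨l, a⟩) ⟨l, b⟩ •
          (f₁ ⟨k, c⟩ ⟨l, a⟩ • u + f₂ ⟨k, c⟩ ⟨l, a⟩ • v) +
        f₂ (D.op ⟨k, c⟩ ⟨l, a⟩) ⟨l, b⟩ • w := by
      rw [hA5 ⟨k, c⟩ l a b, L4 ⟨k, c⟩ l a b, hA6 ⟨k, c⟩ l a b]
      simp only [smul_add, mul_smul, add_assoc]
    exact MCQData.mkpair_eq (hopmul ⟨k, c⟩ l a b) hu
  · -- distributivity
    rintro ⟨k1, p, u⟩ ⟨k2, q, v⟩ ⟨k3, r, w⟩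
    have hu : f₁ (D.op ⟨k1, p⟩ ⟨k2, q⟩) ⟨k3, r⟩ •
          (f₁ ⟨k1, p⟩ ⟨k2, q⟩ • u + f₂ ⟨k1, p⟩ ⟨k2, q⟩ • v) +
        f₂ (D.op ⟨k1, p⟩ ⟨k2, q⟩) ⟨k3, r⟩ • w =
        f₁ (D.op ⟨k1, p⟩ ⟨k3, r⟩) (D.op ⟨k2, q⟩ ⟨k3, r⟩) •
          (f₁ ⟨k1, p⟩ ⟨k3, r⟩ • u + f₂ ⟨k1, p⟩ ⟨k3, r⟩ • w) +
        f₂ (D.op ⟨k1, p⟩ ⟨k3, r⟩) (D.op ⟨k2, q⟩ ⟨k3, r⟩) •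
          (f₁ ⟨k2, q⟩ ⟨k3, r⟩ • v + f₂ ⟨k2, q⟩ ⟨k3, r⟩ • w) := by
      simp only [smul_add, smul_smul]
      rw [hA7 ⟨k1, p⟩ ⟨k2, q⟩ ⟨k3, r⟩, hA8 ⟨k1, p⟩ ⟨k2, q⟩ ⟨k3, r⟩,
        hA9 ⟨k1, p⟩ ⟨k2, q⟩ ⟨k3, r⟩, add_smul]
      abel
    exact MCQData.mkpair_eq (hdist ⟨k1, p⟩ ⟨k2, q⟩ ⟨k3, r⟩) hu
  · -- common component for products
    rintro l ⟨a, u⟩ ⟨b, v⟩ ⟨k, c, w⟩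
    obtain ⟨m, a', b', h1, h2, h3⟩ := hcomm l a b ⟨k, c⟩
    refine ⟨m, (a', f₁ ⟨l, a⟩ ⟨k, c⟩ • u + f₂ ⟨l, a⟩ ⟨k, c⟩ • w),
      (b', f₁ ⟨l, b⟩ ⟨k, c⟩ • v + f₂ ⟨l, b⟩ ⟨k, c⟩ • w), ?_, ?_, ?_⟩
    · exact MCQData.mkpair_eq h1 rfl
    · exact MCQData.mkpair_eq h2 rfl
    · have hw : f₂ ⟨l, D.mul l a b⟩ ⟨k, c⟩ = f₂ ⟨l, a⟩ ⟨k, c⟩ +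
          f₁ ⟨m, a'⟩ ⟨m, D.inv m a'⟩ * f₂ ⟨l, b⟩ ⟨k, c⟩ := by
        rw [hA3 l a b ⟨k, c⟩, h2, op_inv l a ⟨k, c⟩ m a' h1,
          hA2 m b' a' ⟨m, D.inv m a'⟩]
      have hv := L7 l a b ⟨k, c⟩ m a' h1
      have hu : f₁ ⟨l, D.mul l a b⟩ ⟨k, c⟩ • (u + f₁ ⟨l, a⟩ ⟨l, D.inv l a⟩ • v) +
          f₂ ⟨l, D.mul l a b⟩ ⟨k, c⟩ • w =
          (f₁ ⟨l, a⟩ ⟨k, c⟩ • u + f₂ ⟨l, a⟩ ⟨k, c⟩ • w) +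
          f₁ ⟨m, a'⟩ ⟨m, D.inv m a'⟩ •
            (f₁ ⟨l, b⟩ ⟨k, c⟩ • v + f₂ ⟨l, b⟩ ⟨k, c⟩ • w) := by
        rw [hw, hA2 l (D.mul l a b) b ⟨k, c⟩, hA2 l a b ⟨k, c⟩]
        simp only [smul_add, smul_smul, add_smul]
        rw [hv]
        abel
      exact MCQData.mkpair_eq h3 hu
end

section
/- Let X = ⨆_{λ∈Λ} G_λ be a multiple conjugation quandle, R a ring, and f₁, f₂ : X × X → R maps. If the set ⨆_{λ∈Λ} (G_λ × R) with operations (x,u) ◁ (y,v) = (x ◁ y, f₁(x,y)u + f₂(x,y)v) and, on each G_λ × R, (a,u)(b,v) = (ab, u + f₁(a,a⁻¹)v), is a multiple conjugation quandle (where R is regarded as a left R-module over itself), then (f₁, f₂) is an MCQ Alexander pair. -/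
universe u v w x u' v'

section Aux



variable {Λ : Type u} {G : Λ → Type v}

theorem aux_inv_of_mul_right (D : MCQData Λ G) (hg : D.IsGroupData) {l : Λ} {p q : G l}
    (h : D.mul l p q = D.one l) : q = D.inv l p := by
  obtain ⟨assoc, one_mul, mul_one, inv_mul, mul_inv⟩ := hg
  calc q = D.mul l (D.one l) q := (one_mul l q).symm
    _ = D.mul l (D.mul l (D.inv l p) p) q := by rw [inv_mul]
    _ = D.mul l (D.inv l p) (D.mul l p q) := assoc ..
    _ = D.inv l p := by rw [h, mul_one]

theorem aux_inv_of_mul_left (D : MCQData Λ G) (hg : D.IsGroupData) {l : Λ} {p q : G l}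
    (h : D.mul l q p = D.one l) : q = D.inv l p := by
  obtain ⟨assoc, one_mul, mul_one, inv_mul, mul_inv⟩ := hg
  calc q = D.mul l q (D.one l) := (mul_one l q).symm
    _ = D.mul l q (D.mul l p (D.inv l p)) := by rw [mul_inv]
    _ = D.mul l (D.mul l q p) (D.inv l p) := (assoc ..).symm
    _ = D.inv l p := by rw [h, one_mul]

theorem aux_inv_inv (D : MCQData Λ G) (hg : D.IsGroupData) {l : Λ} (p : G l) :
    D.inv l (D.inv l p) = p :=
  (aux_inv_of_mul_right D hg (hg.2.2.2.1 l p)).symm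

theorem aux_idem (D : MCQData Λ G) (hg : D.IsGroupData) {l : Λ} {p : G l}
    (h : D.mul l p p = p) : p = D.one l := by
  obtain ⟨assoc, one_mul, mul_one, inv_mul, mul_inv⟩ := hg
  calc p = D.mul l p (D.one l) := (mul_one l p).symm
    _ = D.mul l p (D.mul l p (D.inv l p)) := by rw [mul_inv]
    _ = D.mul l (D.mul l p p) (D.inv l p) := (assoc ..).symm
    _ = D.one l := by rw [h, mul_inv]

theorem aux_cancel (D : MCQData Λ G) (hg : D.IsGroupData) {l : Λ} (a b : G l) :
    D.mul l a (D.mul l (D.inv l a) b) = b := by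
  obtain ⟨assoc, one_mul, mul_one, inv_mul, mul_inv⟩ := hg
  rw [← assoc, mul_inv, one_mul]

theorem aux_inv_mul_rev (D : MCQData Λ G) (hg : D.IsGroupData) {l : Λ} (a b : G l) :
    D.inv l (D.mul l a b) = D.mul l (D.inv l b) (D.inv l a) := by
  obtain ⟨assoc, one_mul, mul_one, inv_mul, mul_inv⟩ := hg
  refine (aux_inv_of_mul_right D ⟨assoc, one_mul, mul_one, inv_mul, mul_inv⟩ ?_).symm
  rw [assoc, ← assoc l b, mul_inv, one_mul, mul_inv]

/-- `e ◁ x` is the identity of its component. -/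
theorem aux_one_op (D : MCQData Λ G) (hD : D.IsMCQ) (l : Λ) (x : Σ l, G l) :
    ∃ m : Λ, D.op ⟨l, D.one l⟩ x = ⟨m, D.one m⟩ := by
  obtain ⟨m, p, q, h1, h2, h3⟩ := hD.2.2.2.2.2 l (D.one l) (D.one l) x
  refine ⟨m, ?_⟩
  have hpq : p = q := by
    have := h1.symm.trans h2
    exact eq_of_heq (Sigma.mk.inj_iff.mp this).2
  rw [hD.1.2.1 l (D.one l)] at h3
  have hpp : p = D.mul m p p := by
    subst hpq
    have := h1.symm.trans h3
    exact eq_of_heq (Sigma.mk.inj_iff.mp this).2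
  rw [h1, aux_idem D hD.1 hpp.symm]

/-- `a⁻¹ ◁ x` is the inverse of `a ◁ x`. -/
theorem aux_inv_op (D : MCQData Λ G) (hD : D.IsMCQ) (l : Λ) (a : G l) (x : Σ l, G l) :
    D.op ⟨l, D.inv l a⟩ x =
      ⟨(D.op ⟨l, a⟩ x).1, D.inv (D.op ⟨l, a⟩ x).1 (D.op ⟨l, a⟩ x).2⟩ := by
  obtain ⟨m, p, q, h1, h2, h3⟩ := hD.2.2.2.2.2 l a (D.inv l a) x
  rw [hD.1.2.2.2.2 l a] at h3
  obtain ⟨m', hone⟩ := aux_one_op D hD l x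
  have := hone.symm.trans h3
  obtain ⟨hm, hval⟩ := Sigma.mk.inj_iff.mp this
  subst hm
  have : D.mul m' p q = D.one m' := (eq_of_heq hval).symm
  rw [h2, h1, ← aux_inv_of_mul_right D hD.1 this]

end Aux
/-- if `⨆ (G l × R)` with `(x,u) ◁ (y,v) = (x ◁ y, f₁(x,y)u + f₂(x,y)v)`
and `(a,u)(b,v) = (ab, u + f₁(a,a⁻¹)v)` is an MCQ (for some identity and inversion
data), then `(f₁, f₂)` is an MCQ Alexander pair. -/
theorem mcq_gives_alexander_pair {Λ : Type u} {G : Λ → Type v} {R : Type w} [Ring R]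
    (D : MCQData Λ G) (hD : D.IsMCQ)
    (f₁ f₂ : (Σ l, G l) → (Σ l, G l) → R)
    (h : ∃ (o : ∀ l : Λ, G l × R) (i : ∀ l : Λ, G l × R → G l × R),
      (MCQData.mk (MCQData.alexMul D f₁ R) o i (MCQData.quadOp D f₁ f₂ R) :
        MCQData Λ fun l => G l × R).IsMCQ) :
    D.IsMCQAlexanderPair f₁ f₂ := by
  obtain ⟨o, i, hE⟩ := h
  obtain ⟨⟨Eassoc, Eone_mul, Emul_one, Einv_mul, Emul_inv⟩, Econj, Eid, Emulax, Edist, Ecomp⟩ := hE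
  have hg := hD.1
  -- identify the identity of each component of the extension
  have ho : ∀ l : Λ, o l = (D.one l, (0 : R)) := by
    intro l
    have h1 := congrArg Prod.fst (Eone_mul l (D.one l, 0))
    have h2 := congrArg Prod.snd (Eone_mul l (D.one l, 0))
    simp only [MCQData.alexMul] at h1 h2
    rw [hg.2.2.1 l (o l).1] at h1
    rw [smul_zero, add_zero] at h2
    exact Prod.ext h1 h2
  -- identify the inversion of each component of the extension
  have hi1 : ∀ (l : Λ) (p : G l × R), (i l p).1 = D.inv l p.1 := by
    intro l p
    have h1 := congrArg Prod.fst (Einv_mul l p)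
    simp only [MCQData.alexMul, ho] at h1
    exact aux_inv_of_mul_left D hg h1
  have hi2 : ∀ (l : Λ) (p : G l × R),
      (i l p).2 = -(f₁ ⟨l, D.inv l p.1⟩ ⟨l, p.1⟩ * p.2) := by
    intro l p
    have h2 := congrArg Prod.snd (Einv_mul l p)
    simp only [MCQData.alexMul, ho, hi1, aux_inv_inv D hg, smul_eq_mul] at h2
    exact eq_neg_of_add_eq_zero_left h2
  -- consequences of the conjugation axiom
  have hc1 : ∀ (l : Λ) (a b : G l), f₁ ⟨l, a⟩ ⟨l, b⟩ = f₁ ⟨l, D.inv l b⟩ ⟨l, b⟩ := by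
    intro l a b
    have h := congrArg (fun z : Σ l', G l' × R => z.2.2) (Econj l (a, 1) (b, 0))
    simp only [MCQData.quadOp, MCQData.alexMul, hi1, hi2, aux_inv_inv D hg, smul_eq_mul,
      mul_zero, mul_one, zero_add, add_zero, neg_zero] at h
    exact h
  have hc2 : ∀ (l : Λ) (a b : G l), f₂ ⟨l, a⟩ ⟨l, b⟩ =
      -f₁ ⟨l, D.inv l b⟩ ⟨l, b⟩ +
        f₁ ⟨l, D.mul l (D.inv l b) a⟩ ⟨l, D.inv l (D.mul l (D.inv l b) a)⟩ := by
    intro l a b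
    have h := congrArg (fun z : Σ l', G l' × R => z.2.2) (Econj l (a, 0) (b, 1))
    simp only [MCQData.quadOp, MCQData.alexMul, hi1, hi2, aux_inv_inv D hg, smul_eq_mul,
      mul_zero, mul_one, zero_add, add_zero, neg_zero] at h
    exact h
  -- consequences of the component-multiplicativity axiom
  have hcomp : ∀ (l : Λ) (a b : G l) (x : Σ l', G l') (u v t : R),
      f₁ ⟨l, D.mul l a b⟩ x * (u + f₁ ⟨l, a⟩ ⟨l, D.inv l a⟩ * v) +
          f₂ ⟨l, D.mul l a b⟩ x * t =
        (f₁ ⟨l, a⟩ x * u + f₂ ⟨l, a⟩ x * t) +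
          f₁ (D.op ⟨l, a⟩ x)
              ⟨(D.op ⟨l, a⟩ x).1, D.inv (D.op ⟨l, a⟩ x).1 (D.op ⟨l, a⟩ x).2⟩ *
            (f₁ ⟨l, b⟩ x * v + f₂ ⟨l, b⟩ x * t) := by
    intro l a b x u v t
    obtain ⟨m₀, x₀⟩ := x
    obtain ⟨m, a', b', h1, h2, h3⟩ := Ecomp l (a, u) (b, v) ⟨m₀, (x₀, t)⟩
    have p1 := congrArg (fun z : Σ l', G l' × R => (⟨z.1, z.2.1⟩ : Σ l', G l')) h1
    have r1 := congrArg (fun z : Σ l', G l' × R => z.2.2) h1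
    have r2 := congrArg (fun z : Σ l', G l' × R => z.2.2) h2
    have r3 := congrArg (fun z : Σ l', G l' × R => z.2.2) h3
    simp only [MCQData.quadOp, MCQData.alexMul, smul_eq_mul, Sigma.eta] at p1 r1 r2 r3
    rw [← r1, ← r2] at r3
    rw [p1]
    dsimp only
    exact r3
  have hE1 : ∀ (l : Λ) (a b : G l) (x : Σ l', G l'),
      f₁ ⟨l, D.mul l a b⟩ x = f₁ ⟨l, a⟩ x := by
    intro l a b x
    have := hcomp l a b x 1 0 0
    simpa using this
  have hfst : ∀ (l : Λ) (a b : G l) (x : Σ l', G l'), f₁ ⟨l, a⟩ x = f₁ ⟨l, b⟩ x := by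
    intro l a b x
    have := hE1 l a (D.mul l (D.inv l a) b) x
    rw [aux_cancel D hg] at this
    exact this.symm
  have hE3 : ∀ (l : Λ) (a b : G l) (x : Σ l', G l'),
      f₂ ⟨l, D.mul l a b⟩ x = f₂ ⟨l, a⟩ x +
        f₁ (D.op ⟨l, a⟩ x)
            ⟨(D.op ⟨l, a⟩ x).1, D.inv (D.op ⟨l, a⟩ x).1 (D.op ⟨l, a⟩ x).2⟩ *
          f₂ ⟨l, b⟩ x := by
    intro l a b x
    have := hcomp l a b x 0 0 1
    simpa using this
  refine ⟨?_, ?_, ?_, ?_, ?_, ?_, ?_, ?_, ?_⟩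
  · -- condition (i)
    intro l a b
    rw [hc1, hc2, add_neg_cancel_left, aux_inv_mul_rev D hg, aux_inv_inv D hg]
    exact hfst l _ a _
  · -- condition (ii) first part
    intro l a b x
    exact hfst l a b x
  · -- condition (ii) second part
    intro l a b x
    rw [hE3 l a b x, aux_inv_op D hD l a x]
    obtain ⟨m, a', b', h1, h2, _⟩ := hD.2.2.2.2.2 l a b x
    rw [h1, h2]
    dsimp only
    rw [hfst m a' b']
  · -- condition (iii) first part
    intro x l
    obtain ⟨m₀, x₀⟩ := x
    have h := congrArg (fun z : Σ l', G l' × R => z.2.2) (Eid ⟨m₀, (x₀, 1)⟩ l)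
    simp only [MCQData.quadOp, ho, smul_eq_mul, mul_zero, mul_one, add_zero] at h
    exact h
  · -- condition (iii) second part
    intro x l a b
    obtain ⟨m₀, x₀⟩ := x
    have h := congrArg (fun z : Σ l', G l' × R => z.2.2)
      (Emulax ⟨m₀, (x₀, 1)⟩ l (a, 0) (b, 0))
    simp only [MCQData.quadOp, MCQData.alexMul, smul_eq_mul, Sigma.eta, mul_zero, mul_one,
      add_zero, zero_add] at h
    exact h
  · -- condition (iii) third part
    intro x l a b
    obtain ⟨m₀, x₀⟩ := x
    have h := congrArg (fun z : Σ l', G l' × R => z.2.2)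
      (Emulax ⟨m₀, (x₀, 0)⟩ l (a, 1) (b, 0))
    simp only [MCQData.quadOp, MCQData.alexMul, smul_eq_mul, Sigma.eta, mul_zero, mul_one,
      add_zero, zero_add] at h
    exact h
  · -- condition (iv) first part
    intro x y z
    obtain ⟨mx, x₀⟩ := x
    obtain ⟨my, y₀⟩ := y
    obtain ⟨mz, z₀⟩ := z
    have h := congrArg (fun z : Σ l', G l' × R => z.2.2)
      (Edist ⟨mx, (x₀, 1)⟩ ⟨my, (y₀, 0)⟩ ⟨mz, (z₀, 0)⟩)
    simp only [MCQData.quadOp, smul_eq_mul, Sigma.eta, mul_zero, mul_one, add_zero,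
      zero_add] at h
    exact h
  · -- condition (iv) second part
    intro x y z
    obtain ⟨mx, x₀⟩ := x
    obtain ⟨my, y₀⟩ := y
    obtain ⟨mz, z₀⟩ := z
    have h := congrArg (fun z : Σ l', G l' × R => z.2.2)
      (Edist ⟨mx, (x₀, 0)⟩ ⟨my, (y₀, 1)⟩ ⟨mz, (z₀, 0)⟩)
    simp only [MCQData.quadOp, smul_eq_mul, Sigma.eta, mul_zero, mul_one, add_zero,
      zero_add] at h
    exact h
  · -- condition (iv) third part
    intro x y z
    obtain ⟨mx, x₀⟩ := x
    obtain ⟨my, y₀⟩ := y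
    obtain ⟨mz, z₀⟩ := z
    have h := congrArg (fun z : Σ l', G l' × R => z.2.2)
      (Edist ⟨mx, (x₀, 0)⟩ ⟨my, (y₀, 0)⟩ ⟨mz, (z₀, 1)⟩)
    simp only [MCQData.quadOp, smul_eq_mul, Sigma.eta, mul_zero, mul_one, add_zero,
      zero_add] at h
    exact h
end

section
/- Let X = ⨆_{λ∈Λ} G_λ be a multiple conjugation quandle, R a ring, M a left R-module, and (f₁, f₂) an MCQ Alexander pair of maps f₁, f₂ : X × X → R. Then the multiple conjugation quandle X̃(f₁,f₂) = ⨆_{λ∈Λ} (G_λ × M), with operations (x,u) ◁ (y,v) = (x ◁ y, f₁(x,y)u + f₂(x,y)v) and (a,u)(b,v) = (ab, u + f₁(a,a⁻¹)v) on each G_λ × M, is an extension of X: the projection pr_X : X̃(f₁,f₂) → X sending (x,u) to x is a surjective MCQ homomorphism whose fibers all have the same cardinality. -/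
universe u v w x u' v'

namespace AlexExtAux

open MCQData

variable {Λ : Type u} {G : Λ → Type v}
variable (D : MCQData Λ G)

section GroupLemmas

lemma eq_inv_of_mul_eq_one (hG : D.IsGroupData) {l : Λ} {a q : G l} (h : D.mul l a q = D.one l) :
    q = D.inv l a := by
  obtain ⟨hassoc, honemul, hmulone, hinvmul, hmulinv⟩ := hG
  calc q = D.mul l (D.one l) q := (honemul l q).symm
    _ = D.mul l (D.mul l (D.inv l a) a) q := by rw [hinvmul]
    _ = D.mul l (D.inv l a) (D.mul l a q) := hassoc _ _ _ _
    _ = D.mul l (D.inv l a) (D.one l) := by rw [h]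
    _ = D.inv l a := hmulone _ _

lemma inv_one (hG : D.IsGroupData) (l : Λ) : D.inv l (D.one l) = D.one l :=
  (eq_inv_of_mul_eq_one D hG (hG.2.1 l (D.one l))).symm

lemma inv_inv (hG : D.IsGroupData) {l : Λ} (a : G l) : D.inv l (D.inv l a) = a :=
  (eq_inv_of_mul_eq_one D hG (hG.2.2.2.1 l a)).symm

lemma inv_mul (hG : D.IsGroupData) {l : Λ} (a b : G l) :
    D.inv l (D.mul l a b) = D.mul l (D.inv l b) (D.inv l a) := by
  obtain ⟨hassoc, honemul, hmulone, hinvmul, hmulinv⟩ := hG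
  refine (eq_inv_of_mul_eq_one D ⟨hassoc, honemul, hmulone, hinvmul, hmulinv⟩ ?_).symm
  calc D.mul l (D.mul l a b) (D.mul l (D.inv l b) (D.inv l a))
      = D.mul l a (D.mul l b (D.mul l (D.inv l b) (D.inv l a))) := hassoc _ _ _ _
    _ = D.mul l a (D.mul l (D.mul l b (D.inv l b)) (D.inv l a)) := by rw [hassoc]
    _ = D.mul l a (D.inv l a) := by rw [hmulinv, honemul]
    _ = D.one l := hmulinv _ _

lemma eq_one_of_idem (hG : D.IsGroupData) {l : Λ} {a : G l} (h : D.mul l a a = a) : a = D.one l := by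
  obtain ⟨hassoc, honemul, hmulone, hinvmul, hmulinv⟩ := hG
  calc a = D.mul l (D.one l) a := (honemul l a).symm
    _ = D.mul l (D.mul l (D.inv l a) a) a := by rw [hinvmul]
    _ = D.mul l (D.inv l a) (D.mul l a a) := hassoc _ _ _ _
    _ = D.mul l (D.inv l a) a := by rw [h]
    _ = D.one l := hinvmul _ _

end GroupLemmas

section MCQLemmas

lemma op_cancel (hD : D.IsMCQ) {l : Λ} (x : Σ l, G l) (a : G l) :
    D.op (D.op x ⟨l, a⟩) ⟨l, D.inv l a⟩ = x := by
  obtain ⟨hG, _, hopone, hopmul, _, _⟩ := hD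
  rw [← hopmul, hG.2.2.2.2 l a, hopone]

lemma op_one_left (hD : D.IsMCQ) (l : Λ) (x : Σ l, G l) :
    ∃ m : Λ, D.op ⟨l, D.one l⟩ x = ⟨m, D.one m⟩ := by
  obtain ⟨m, a', b', ha, hb, hab⟩ := hD.2.2.2.2.2 l (D.one l) (D.one l) x
  refine ⟨m, ?_⟩
  rw [hD.1.2.1 l (D.one l)] at hab
  rw [ha] at hab ⊢
  obtain ⟨-, h2⟩ := Sigma.mk.inj_iff.mp hab
  have h2' : a' = D.mul m a' b' := eq_of_heq h2
  rw [hb] at ha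
  obtain ⟨-, h3⟩ := Sigma.mk.inj_iff.mp ha
  have h3' : b' = a' := eq_of_heq h3
  rw [h3'] at h2'
  exact congrArg _ (eq_one_of_idem D hD.1 h2'.symm)

lemma op_inv_left (hD : D.IsMCQ) {l : Λ} {a : G l} {x : Σ l, G l} {m : Λ} {a' : G m}
    (h : D.op ⟨l, a⟩ x = ⟨m, a'⟩) :
    D.op ⟨l, D.inv l a⟩ x = ⟨m, D.inv m a'⟩ := by
  obtain ⟨m₂, p, q, hp, hq, hpq⟩ := hD.2.2.2.2.2 l a (D.inv l a) x
  rw [hD.1.2.2.2.2 l a] at hpq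
  obtain ⟨n, hn⟩ := op_one_left D hD l x
  rw [hn] at hpq
  obtain ⟨hm, h2⟩ := Sigma.mk.inj_iff.mp hpq
  subst hm
  have h2' := eq_of_heq h2
  rw [h] at hp
  obtain ⟨hm2, h3⟩ := Sigma.mk.inj_iff.mp hp
  subst hm2
  have h3' := eq_of_heq h3
  subst h3'
  rw [hq]
  exact congrArg _ (eq_inv_of_mul_eq_one D hD.1 h2'.symm)

end MCQLemmas

section FLemmas

variable {R : Type w} [Ring R]
variable (f₁ f₂ : (Σ l, G l) → (Σ l, G l) → R)

/-- A sigma-with-product extensionality helper. -/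
lemma sigma_prod_ext {M : Type x} {s t : Σ l, G l} (h : s = t) {u v : M} (h2 : u = v) :
    (⟨s.1, (s.2, u)⟩ : Σ l, G l × M) = ⟨t.1, (t.2, v)⟩ := by subst h; subst h2; rfl

lemma f1_inv_right (hD : D.IsMCQ) (hf : D.IsMCQAlexanderPair f₁ f₂) (x : Σ l, G l) {l : Λ} (a : G l) :
    f₁ (D.op x ⟨l, a⟩) ⟨l, D.inv l a⟩ * f₁ x ⟨l, a⟩ = 1 := by
  have h := hf.2.2.2.2.1 x l a (D.inv l a)
  rw [hD.1.2.2.2.2 l a, hf.2.2.2.1 x l] at h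
  exact h.symm

lemma f1_inv_right' (hD : D.IsMCQ) (hf : D.IsMCQAlexanderPair f₁ f₂) (x : Σ l, G l) {l : Λ} (a : G l) :
    f₁ x ⟨l, a⟩ * f₁ (D.op x ⟨l, a⟩) ⟨l, D.inv l a⟩ = 1 := by
  have h := hf.2.2.2.2.1 (D.op x ⟨l, a⟩) l (D.inv l a) a
  rw [hD.1.2.2.2.1 l a, hf.2.2.2.1 _ l, op_cancel D hD x a] at h
  exact h.symm

/-- `f₂ x c = f₁ x c * f₂ x e`. -/
lemma f2_eq (hD : D.IsMCQ) (hf : D.IsMCQAlexanderPair f₁ f₂) (x : Σ l, G l) {l : Λ} (c : G l) :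
    f₂ x ⟨l, c⟩ = f₁ x ⟨l, c⟩ * f₂ x ⟨l, D.one l⟩ := by
  have h := hf.2.2.2.2.2.1 x l (D.one l) c
  rwa [hD.1.2.1 l c, hD.2.2.1 x l] at h

/-- `1 + f₂ a e = f₁ a a⁻¹`. -/
lemma one_add_f2_one (hD : D.IsMCQ) (hf : D.IsMCQAlexanderPair f₁ f₂) {l : Λ} (a : G l) :
    1 + f₂ ⟨l, a⟩ ⟨l, D.one l⟩ = f₁ ⟨l, a⟩ ⟨l, D.inv l a⟩ := by
  have h := hf.1 l a (D.one l)
  rwa [hD.1.2.2.1 l (D.inv l a), hf.2.2.2.1 ⟨l, a⟩ l] at h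

/-- The key compatibility: `f₂ x (ab) * f₁(a, a⁻¹) = f₂ (x ◁ a) b`. -/
lemma f2_op_key (hD : D.IsMCQ) (hf : D.IsMCQAlexanderPair f₁ f₂) (x : Σ l, G l) {l : Λ} (a b : G l) :
    f₂ x ⟨l, D.mul l a b⟩ * f₁ ⟨l, a⟩ ⟨l, D.inv l a⟩ =
      f₂ (D.op x ⟨l, a⟩) ⟨l, b⟩ := by
  have he : f₂ (D.op x ⟨l, a⟩) ⟨l, D.one l⟩ =
      f₁ x ⟨l, a⟩ * f₂ x ⟨l, D.one l⟩ + f₂ x ⟨l, a⟩ * f₂ ⟨l, a⟩ ⟨l, D.one l⟩ := by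
    have h := hf.2.2.2.2.2.2.2.2 x ⟨l, a⟩ ⟨l, D.one l⟩
    rwa [hD.2.2.1 x l, hD.2.2.1 ⟨l, a⟩ l] at h
  rw [f2_eq D f₁ f₂ hD hf (D.op x ⟨l, a⟩) b, he,
    f2_eq D f₁ f₂ hD hf x (D.mul l a b), f2_eq D f₁ f₂ hD hf x a,
    hf.2.2.2.2.1 x l a b, ← one_add_f2_one D f₁ f₂ hD hf a]
  noncomm_ring

/-- `g` is an antihomomorphism: `f₁ c (ab) = f₁ c b * f₁ c a`. -/
lemma g_antihom (hD : D.IsMCQ) (hf : D.IsMCQAlexanderPair f₁ f₂) {l : Λ} (c a b : G l) :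
    f₁ ⟨l, c⟩ ⟨l, D.mul l a b⟩ = f₁ ⟨l, c⟩ ⟨l, b⟩ * f₁ ⟨l, c⟩ ⟨l, a⟩ := by
  have h := hf.2.2.2.2.1 ⟨l, c⟩ l a b
  rw [hD.2.1 l c a] at h
  rw [h, hf.2.1 l (D.mul l (D.mul l (D.inv l a) c) a) c ⟨l, b⟩]

/-- Conjugation compatibility of `g`: `f₁ a x * f₁ a a⁻¹ = f₁ a' a'⁻¹ * f₁ a x`. -/
lemma g_conj (hD : D.IsMCQ) (hf : D.IsMCQAlexanderPair f₁ f₂) {l : Λ} (a : G l) {x : Σ l, G l}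
    {m : Λ} {a' : G m} (h : D.op ⟨l, a⟩ x = ⟨m, a'⟩) :
    f₁ ⟨l, a⟩ x * f₁ ⟨l, a⟩ ⟨l, D.inv l a⟩ =
      f₁ ⟨m, a'⟩ ⟨m, D.inv m a'⟩ * f₁ ⟨l, a⟩ x := by
  have h4 := hf.2.2.2.2.2.2.1 ⟨l, a⟩ ⟨l, D.inv l a⟩ x
  rw [h, op_inv_left D hD h, hD.2.1 l a (D.inv l a)] at h4
  rwa [hf.2.1 l (D.mul l (D.mul l (D.inv l (D.inv l a)) a) (D.inv l a)) a x] at h4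

lemma smul_expand {M : Type x} [AddCommGroup M] [Module R M] (r s : R) (u : M) (v : M) :
    r • (u + s • v) = r • u + (r * s) • v := by rw [smul_add, mul_smul]

lemma g_mul (hD : D.IsMCQ) (hf : D.IsMCQAlexanderPair f₁ f₂) {l : Λ} (a b : G l) :
    f₁ ⟨l, D.mul l a b⟩ ⟨l, D.inv l (D.mul l a b)⟩ =
      f₁ ⟨l, a⟩ ⟨l, D.inv l a⟩ * f₁ ⟨l, b⟩ ⟨l, D.inv l b⟩ := by
  rw [inv_mul D hD.1 a b,
    g_antihom D f₁ f₂ hD hf (D.mul l a b) (D.inv l b) (D.inv l a),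
    hf.2.1 l (D.mul l a b) a ⟨l, D.inv l a⟩,
    hf.2.1 l (D.mul l a b) b ⟨l, D.inv l b⟩]

lemma g_self_inv (hD : D.IsMCQ) (hf : D.IsMCQAlexanderPair f₁ f₂) {l : Λ} (a : G l) :
    f₁ ⟨l, a⟩ ⟨l, D.inv l a⟩ * f₁ ⟨l, a⟩ ⟨l, a⟩ = 1 := by
  have h := g_antihom D f₁ f₂ hD hf a a (D.inv l a)
  rw [hD.1.2.2.2.2 l a, hf.2.2.2.1 ⟨l, a⟩ l] at h
  exact h.symm

end FLemmas

end AlexExtAux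

/-- for an MCQ Alexander pair `(f₁, f₂)` and a left `R`-module `M`,
the MCQ `X̃(f₁,f₂) = ⨆ (G l × M)` is an extension of `X`: the projection is a
surjective MCQ homomorphism whose fibers all have the same cardinality. -/
theorem alexExt_is_extension {Λ : Type u} {G : Λ → Type v} {R : Type w} [Ring R]
    (D : MCQData Λ G) (hD : D.IsMCQ)
    (f₁ f₂ : (Σ l, G l) → (Σ l, G l) → R) (hf : D.IsMCQAlexanderPair f₁ f₂)
    (M : Type x) [AddCommGroup M] [Module R M] :
    (MCQData.alexExt D f₁ f₂ M).IsMCQ ∧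
    MCQData.IsMCQHom (MCQData.alexExt D f₁ f₂ M) D
      (fun z => ⟨z.1, z.2.1⟩) ∧
    Function.Surjective (fun z : Σ l, G l × M => (⟨z.1, z.2.1⟩ : Σ l, G l)) ∧
    (∀ x y : Σ l, G l,
      Nonempty (((fun z : Σ l, G l × M => (⟨z.1, z.2.1⟩ : Σ l, G l)) ⁻¹' {x}) ≃
        ((fun z : Σ l, G l × M => (⟨z.1, z.2.1⟩ : Σ l, G l)) ⁻¹' {y}))) := by
  open AlexExtAux in
  have hG := hD.1
  have hconj := hD.2.1
  have hopone := hD.2.2.1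
  have hopmul := hD.2.2.2.1
  have hdist := hD.2.2.2.2.1
  have hcomp := hD.2.2.2.2.2
  have hassoc := hG.1
  have honemul := hG.2.1
  have hmulone := hG.2.2.1
  have hinvmul := hG.2.2.2.1
  have hmulinv := hG.2.2.2.2
  have h1 := hf.1
  have h2a := hf.2.1
  have h2b := hf.2.2.1
  have h3a := hf.2.2.2.1
  have h3b := hf.2.2.2.2.1
  have h3c := hf.2.2.2.2.2.1
  have h4a := hf.2.2.2.2.2.2.1
  have h4b := hf.2.2.2.2.2.2.2.1
  have h4c := hf.2.2.2.2.2.2.2.2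
  refine ⟨⟨⟨?_, ?_, ?_, ?_, ?_⟩, ?_, ?_, ?_, ?_, ?_⟩, ⟨?_, ?_⟩, ?_, ?_⟩
  · -- associativity
    intro l p q r
    simp only [MCQData.alexExt, MCQData.alexMul, Prod.mk.injEq]
    refine ⟨hassoc l _ _ _, ?_⟩
    rw [g_mul D f₁ f₂ hD hf p.1 q.1, mul_smul, smul_add, add_assoc]
  · -- one_mul
    intro l p
    simp only [MCQData.alexExt, MCQData.alexMul]
    rw [inv_one D hG l, h3a ⟨l, D.one l⟩ l, one_smul, zero_add, honemul]
  · -- mul_one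
    intro l p
    simp only [MCQData.alexExt, MCQData.alexMul]
    rw [smul_zero, add_zero, hmulone]
  · -- inv_mul
    intro l p
    simp only [MCQData.alexExt, MCQData.alexMul]
    rw [inv_inv D hG p.1, h2a l (D.inv l p.1) p.1 ⟨l, p.1⟩, neg_add_cancel, hinvmul]
  · -- mul_inv
    intro l p
    simp only [MCQData.alexExt, MCQData.alexMul]
    rw [smul_neg, ← mul_smul, g_self_inv D f₁ f₂ hD hf p.1, one_smul,
      add_neg_cancel, hmulinv]
  · -- conjugation on components
    intro l p q
    simp only [MCQData.alexExt, MCQData.alexMul, MCQData.quadOp]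
    refine sigma_prod_ext (hconj l p.1 q.1) ?_
    have e1 : f₂ ⟨l, p.1⟩ ⟨l, q.1⟩ =
        f₁ ⟨l, p.1⟩ ⟨l, D.mul l (D.inv l p.1) q.1⟩ - f₁ ⟨l, p.1⟩ ⟨l, q.1⟩ := by
      rw [← h1 l p.1 q.1]; abel
    rw [e1, inv_mul D hG (D.inv l q.1) p.1, inv_inv D hG q.1,
      h2a l (D.inv l q.1) p.1 ⟨l, q.1⟩,
      h2a l q.1 p.1 ⟨l, q.1⟩,
      h2a l (D.mul l (D.inv l q.1) p.1) p.1 ⟨l, D.mul l (D.inv l p.1) q.1⟩]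
    simp only [sub_smul]
    abel
  · -- x ◁ e = x
    intro z l
    simp only [MCQData.alexExt, MCQData.quadOp]
    have : (⟨z.1, (z.2.1, z.2.2)⟩ : Σ l, G l × M) = z := rfl
    rw [← this]
    refine sigma_prod_ext (hopone ⟨z.1, z.2.1⟩ l) ?_
    rw [h3a ⟨z.1, z.2.1⟩ l, one_smul, smul_zero, add_zero]
  · -- x ◁ (ab) = (x ◁ a) ◁ b
    intro z l p q
    simp only [MCQData.alexExt, MCQData.alexMul, MCQData.quadOp]
    refine sigma_prod_ext (hopmul ⟨z.1, z.2.1⟩ l p.1 q.1) ?_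
    have e3 := f2_op_key D f₁ f₂ hD hf ⟨z.1, z.2.1⟩ p.1 q.1
    have e2 := h3c ⟨z.1, z.2.1⟩ l p.1 q.1
    have e1 := h3b ⟨z.1, z.2.1⟩ l p.1 q.1
    rw [smul_expand, e3, e2, e1, smul_expand, mul_smul]
    abel
  · -- self-distributivity
    intro x y z
    simp only [MCQData.alexExt, MCQData.quadOp]
    refine sigma_prod_ext (hdist ⟨x.1, x.2.1⟩ ⟨y.1, y.2.1⟩ ⟨z.1, z.2.1⟩) ?_
    set X := (⟨x.1, x.2.1⟩ : Σ l, G l)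
    set Y := (⟨y.1, y.2.1⟩ : Σ l, G l)
    set Z := (⟨z.1, z.2.1⟩ : Σ l, G l)
    rw [smul_expand, smul_expand, smul_expand,
      ← mul_smul (f₁ (D.op X Y) Z) (f₁ X Y) x.2.2, h4a X Y Z,
      mul_smul, h4b X Y Z,
      mul_smul (f₂ (D.op X Z) (D.op Y Z)) (f₁ Y Z) y.2.2,
      h4c X Y Z, add_smul]
    abel
  · -- (ab) ◁ x = (a ◁ x)(b ◁ x)
    intro l p q x
    obtain ⟨m, a', b', ha, hb, hab⟩ := hcomp l p.1 q.1 ⟨x.1, x.2.1⟩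
    set X := (⟨x.1, x.2.1⟩ : Σ l, G l)
    refine ⟨m, (a', f₁ ⟨l, p.1⟩ X • p.2 + f₂ ⟨l, p.1⟩ X • x.2.2),
      (b', f₁ ⟨l, q.1⟩ X • q.2 + f₂ ⟨l, q.1⟩ X • x.2.2), ?_, ?_, ?_⟩
    · exact sigma_prod_ext ha rfl
    · exact sigma_prod_ext hb rfl
    · simp only [MCQData.alexExt, MCQData.alexMul, MCQData.quadOp]
      refine sigma_prod_ext hab ?_
      have eu : f₁ ⟨l, D.mul l p.1 q.1⟩ X = f₁ ⟨l, p.1⟩ X := h2a l _ p.1 X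
      have ev : f₁ ⟨l, p.1⟩ X * f₁ ⟨l, p.1⟩ ⟨l, D.inv l p.1⟩ =
          f₁ ⟨m, a'⟩ ⟨m, D.inv m a'⟩ * f₁ ⟨l, q.1⟩ X := by
        rw [g_conj D f₁ f₂ hD hf p.1 ha, h2a l p.1 q.1 X]
      have ew : f₂ ⟨l, D.mul l p.1 q.1⟩ X =
          f₂ ⟨l, p.1⟩ X + f₁ ⟨m, a'⟩ ⟨m, D.inv m a'⟩ * f₂ ⟨l, q.1⟩ X := by
        have h := h2b l p.1 q.1 X
        rwa [hb, op_inv_left D hD ha, h2a m b' a' ⟨m, D.inv m a'⟩] at h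
      rw [smul_expand, smul_expand, eu, ev,
        mul_smul (f₁ ⟨m, a'⟩ ⟨m, D.inv m a'⟩) (f₁ ⟨l, q.1⟩ X) q.2,
        ew, add_smul,
        mul_smul (f₁ ⟨m, a'⟩ ⟨m, D.inv m a'⟩) (f₂ ⟨l, q.1⟩ X) x.2.2]
      abel
  · -- hom: op preserved
    intro z w
    rfl
  · -- hom: multiplication preserved
    intro l p q
    exact ⟨l, p.1, q.1, rfl, rfl, rfl⟩
  · -- surjectivity
    intro s
    exact ⟨⟨s.1, (s.2, 0)⟩, rfl⟩
  · -- fibers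
    intro x y
    refine ⟨⟨fun z => ⟨⟨y.1, (y.2, z.1.2.2)⟩, rfl⟩,
      fun z => ⟨⟨x.1, (x.2, z.1.2.2)⟩, rfl⟩, ?_, ?_⟩⟩
    · rintro ⟨z, hz⟩
      apply Subtype.ext
      simp only [Set.mem_preimage, Set.mem_singleton_iff] at hz
      subst hz
      rfl
    · rintro ⟨z, hz⟩
      apply Subtype.ext
      simp only [Set.mem_preimage, Set.mem_singleton_iff] at hz
      subst hz
      rfl
end

section
/- Let X = ⨆_{λ∈Λ} G_λ be a multiple conjugation quandle, R a ring, and f₃, f₄ : ⨆_{λ∈Λ} (G_λ × G_λ) → R maps. Then f₃ and f₄ satisfy conditions (0-i)–(0-iv) if and only if, for each λ ∈ Λ and every left R-module M, the set G_λ × M with multiplication (a,u)(b,v) = (ab, f₃(a,b)u + f₄(a,b)v) is a group; in that case the identity of G_λ × M is (e_λ, 0) and the inverse of (a,u) is (a⁻¹, −f₄(a⁻¹,e_λ)f₃(a,a⁻¹)u). -/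
universe u v w x u' v'

private lemma mulEqOneComm {S : Type*} [Monoid S] {a b : S}
    (ha : IsUnit a) (h : a * b = 1) : b * a = 1 := by
  obtain ⟨u, rfl⟩ := ha
  have hb : b = ↑u⁻¹ := by
    rw [← one_mul b, ← u.inv_mul, mul_assoc, h, mul_one]
  rw [hb, Units.inv_mul]

/-- `f₃, f₄` satisfy conditions (0-i)--(0-iv) iff for each `l` and
every left `R`-module `M`, the multiplication `(a,u)(b,v) = (ab, f₃(a,b)u + f₄(a,b)v)`
makes `G l × M` a group; in that case the identity is `(e_λ, 0)` and the inverse of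
`(a,u)` is `(a⁻¹, -f₄(a⁻¹,e_λ)f₃(a,a⁻¹)u)`. -/
theorem conds0_iff_group {Λ : Type u} {G : Λ → Type v} {R : Type w} [Ring R]
    (D : MCQData Λ G) (hD : D.IsMCQ) (f₃ f₄ : ∀ l : Λ, G l → G l → R) :
    (MCQData.Conds0 D f₃ f₄ ↔
      ∀ (l : Λ) (M : Type w) [AddCommGroup M] [Module R M],
        ∃ (o : G l × M) (i : G l × M → G l × M),
          MCQData.GroupAxiomsOn (MCQData.quadMul D f₃ f₄ M l) o i) ∧
    (MCQData.Conds0 D f₃ f₄ →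
      ∀ (l : Λ) (M : Type w) [AddCommGroup M] [Module R M],
        MCQData.GroupAxiomsOn (MCQData.quadMul D f₃ f₄ M l)
          ((D.one l, 0) : G l × M)
          (fun p => (D.inv l p.1,
            -((f₄ l (D.inv l p.1) (D.one l) * f₃ l p.1 (D.inv l p.1)) • p.2)))) := by
  obtain ⟨⟨hGassoc, hGone, hGone', hGinv, hGinv'⟩, -⟩ := hD
  have forward : MCQData.Conds0 D f₃ f₄ →
      ∀ (l : Λ) (M : Type w) [AddCommGroup M] [Module R M],
        MCQData.GroupAxiomsOn (MCQData.quadMul D f₃ f₄ M l)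
          ((D.one l, 0) : G l × M)
          (fun p => (D.inv l p.1,
            -((f₄ l (D.inv l p.1) (D.one l) * f₃ l p.1 (D.inv l p.1)) • p.2))) := by
    rintro ⟨h1, h2, h3, h4⟩ l M _ _
    have one3 : ∀ a : G l, f₃ l a (D.one l) = 1 := by
      intro a
      have h := h2 l a (D.one l) (D.one l)
      rw [hGone', hGone'] at h
      exact (h1 l a (D.one l)).1.mul_left_cancel (by rw [h, mul_one])
    have one4 : ∀ a : G l, f₄ l (D.one l) a = 1 := by
      intro a
      have h := h4 l (D.one l) a (D.one l)
      rw [hGone, hGone'] at h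
      exact (h1 l a (D.one l)).2.mul_right_cancel (by rw [← h, one_mul])
    have key1 : ∀ a : G l, f₃ l (D.inv l a) a *
        (f₄ l (D.inv l a) (D.one l) * f₃ l a (D.inv l a)) = f₄ l (D.inv l a) a := by
      intro a
      have h3' := h3 l (D.inv l a) a (D.inv l a)
      rw [hGinv, hGinv'] at h3'
      have h2' := h2 l (D.inv l a) a (D.inv l a)
      rw [hGinv, hGinv', one3] at h2'
      have hswap : f₃ l (D.inv l a) a * f₃ l (D.one l) (D.inv l a) = 1 :=
        mulEqOneComm (h1 l (D.one l) (D.inv l a)).1 h2'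
      calc f₃ l (D.inv l a) a * (f₄ l (D.inv l a) (D.one l) * f₃ l a (D.inv l a))
          = f₃ l (D.inv l a) a * (f₃ l (D.one l) (D.inv l a) * f₄ l (D.inv l a) a) := by
            rw [← h3']
        _ = (f₃ l (D.inv l a) a * f₃ l (D.one l) (D.inv l a)) * f₄ l (D.inv l a) a := by
            rw [mul_assoc]
        _ = f₄ l (D.inv l a) a := by rw [hswap, one_mul]
    have key2 : ∀ a : G l, f₄ l a (D.inv l a) * f₄ l (D.inv l a) (D.one l) = 1 := by
      intro a
      have h := h4 l a (D.inv l a) (D.one l)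
      rw [hGinv', hGone'] at h
      rw [← h, one4]
    refine ⟨?_, ?_, ?_, ?_, ?_⟩
    · rintro ⟨a, u⟩ ⟨b, v⟩ ⟨c, w⟩
      simp only [MCQData.quadMul, Prod.mk.injEq]
      refine ⟨hGassoc l a b c, ?_⟩
      simp only [smul_add, smul_smul, h2, h3, h4, add_assoc]
    · rintro ⟨a, u⟩
      simp only [MCQData.quadMul, Prod.mk.injEq]
      exact ⟨hGone l a, by rw [smul_zero, zero_add, one4, one_smul]⟩
    · rintro ⟨a, u⟩
      simp only [MCQData.quadMul, Prod.mk.injEq]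
      exact ⟨hGone' l a, by rw [smul_zero, add_zero, one3, one_smul]⟩
    · rintro ⟨a, u⟩
      simp only [MCQData.quadMul, Prod.mk.injEq]
      refine ⟨hGinv l a, ?_⟩
      rw [smul_neg, smul_smul, key1, neg_add_cancel]
    · rintro ⟨a, u⟩
      simp only [MCQData.quadMul, Prod.mk.injEq]
      refine ⟨hGinv' l a, ?_⟩
      rw [smul_neg, smul_smul, ← mul_assoc, key2, one_mul, add_neg_cancel]
  refine ⟨⟨fun h0 l M _ _ => ⟨_, _, forward h0 l M⟩, ?_⟩, forward⟩
  intro hB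
  have main : ∀ l : Λ,
      (∀ a b c : G l, f₃ l (D.mul l a b) c * f₃ l a b = f₃ l a (D.mul l b c)) ∧
      (∀ a b c : G l,
        f₃ l (D.mul l a b) c * f₄ l a b = f₄ l a (D.mul l b c) * f₃ l b c) ∧
      (∀ a b c : G l, f₄ l (D.mul l a b) c = f₄ l a (D.mul l b c) * f₄ l b c) ∧
      (∀ a : G l, f₃ l a (D.one l) = 1) ∧ (∀ a : G l, f₄ l (D.one l) a = 1) := by
    intro l
    obtain ⟨o, i, hassoc, hle, hre, -, -⟩ := hB l R
    have ho1 : o.1 = D.one l := by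
      have h := congrArg Prod.fst (hle (D.one l, 0))
      simp only [MCQData.quadMul] at h
      exact (hGone' l o.1).symm.trans h
    have hre' : ∀ (a : G l) (u : R),
        f₃ l a (D.one l) * u + f₄ l a (D.one l) * o.2 = u := by
      intro a u
      have h := congrArg Prod.snd (hre (a, u))
      simp only [MCQData.quadMul, smul_eq_mul, ho1] at h
      exact h
    have hle' : ∀ (a : G l) (u : R),
        f₃ l (D.one l) a * o.2 + f₄ l (D.one l) a * u = u := by
      intro a u
      have h := congrArg Prod.snd (hle (a, u))
      simp only [MCQData.quadMul, smul_eq_mul, ho1] at h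
      exact h
    have one3 : ∀ a : G l, f₃ l a (D.one l) = 1 := by
      intro a
      have h0 := hre' a 0
      rw [mul_zero, zero_add] at h0
      have h1 := hre' a 1
      rw [mul_one, h0, add_zero] at h1
      exact h1
    have one4 : ∀ a : G l, f₄ l (D.one l) a = 1 := by
      intro a
      have h0 := hle' a 0
      rw [mul_zero, add_zero] at h0
      have h1 := hle' a 1
      rw [mul_one, h0, zero_add] at h1
      exact h1
    have hA : ∀ (a b c : G l) (u v w : R),
        f₃ l (D.mul l a b) c * (f₃ l a b * u + f₄ l a b * v) +
          f₄ l (D.mul l a b) c * w =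
        f₃ l a (D.mul l b c) * u +
          f₄ l a (D.mul l b c) * (f₃ l b c * v + f₄ l b c * w) := by
      intro a b c u v w
      have h := congrArg Prod.snd (hassoc (a, u) (b, v) (c, w))
      simpa only [MCQData.quadMul, smul_eq_mul] using h
    refine ⟨fun a b c => ?_, fun a b c => ?_, fun a b c => ?_, one3, one4⟩
    · have h := hA a b c 1 0 0
      simpa using h
    · have h := hA a b c 0 1 0
      simpa using h
    · have h := hA a b c 0 0 1
      simpa using h
  have unit3 : ∀ (l : Λ) (a b : G l), IsUnit (f₃ l a b) := by
    intro l a b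
    obtain ⟨c2, c3, c4, one3, one4⟩ := main l
    have e1 : D.mul l (D.mul l a b) (D.inv l b) = a := by
      rw [hGassoc, hGinv', hGone']
    have hL : f₃ l (D.mul l a b) (D.inv l b) * f₃ l a b = 1 := by
      have h := c2 a b (D.inv l b)
      rw [hGinv', one3] at h
      exact h
    have hR : f₃ l a b * f₃ l (D.mul l a b) (D.inv l b) = 1 := by
      have h := c2 (D.mul l a b) (D.inv l b) b
      rw [e1, hGinv, one3] at h
      exact h
    exact ⟨⟨f₃ l a b, f₃ l (D.mul l a b) (D.inv l b), hR, hL⟩, rfl⟩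
  have unit4 : ∀ (l : Λ) (a b : G l), IsUnit (f₄ l a b) := by
    intro l a b
    obtain ⟨c2, c3, c4, one3, one4⟩ := main l
    have e2 : D.mul l (D.inv l a) (D.mul l a b) = b := by
      rw [← hGassoc, hGinv, hGone]
    have hL : f₄ l (D.inv l a) (D.mul l a b) * f₄ l a b = 1 := by
      have h := c4 (D.inv l a) a b
      rw [hGinv, one4] at h
      exact h.symm
    have hR : f₄ l a b * f₄ l (D.inv l a) (D.mul l a b) = 1 := by
      have h := c4 a (D.inv l a) (D.mul l a b)
      rw [hGinv', one4, e2] at h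
      exact h.symm
    exact ⟨⟨f₄ l a b, f₄ l (D.inv l a) (D.mul l a b), hR, hL⟩, rfl⟩
  exact ⟨fun l a b => ⟨unit3 l a b, unit4 l a b⟩, fun l => (main l).1,
    fun l => (main l).2.1, fun l => (main l).2.2.1⟩
end

section
/- Let X = ⨆_{λ∈Λ} G_λ be a multiple conjugation quandle, R a ring, and let f₁, f₂ : X × X → R and f₃, f₄ : ⨆_{λ∈Λ} (G_λ × G_λ) → R be maps satisfying conditions (0-i)–(4-iii). Then for every left R-module M, the set X̃(f₁,f₂,f₃,f₄) = ⨆_{λ∈Λ} (G_λ × M) with operations (x,u) ◁ (y,v) = (x ◁ y, f₁(x,y)u + f₂(x,y)v) and, on each G_λ × M, (a,u)(b,v) = (ab, f₃(a,b)u + f₄(a,b)v), is a multiple conjugation quandle. -/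
universe u v w x u' v'

/-- if `(f₁,f₂,f₃,f₄)` satisfies conditions (0-i)--(4-iii), then for
every left `R`-module `M`, the set `X̃(f₁,f₂,f₃,f₄) = ⨆ (G l × M)` with
`(x,u) ◁ (y,v) = (x ◁ y, f₁(x,y)u + f₂(x,y)v)` and
`(a,u)(b,v) = (ab, f₃(a,b)u + f₄(a,b)v)` is an MCQ. -/
theorem conds_give_mcq {Λ : Type u} {G : Λ → Type v} {R : Type w} [Ring R]
    (D : MCQData Λ G) (hD : D.IsMCQ)
    (f₁ f₂ : (Σ l, G l) → (Σ l, G l) → R) (f₃ f₄ : ∀ l : Λ, G l → G l → R)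
    (hc : MCQData.Conds D f₁ f₂ f₃ f₄)
    (M : Type x) [AddCommGroup M] [Module R M] :
    ∃ (o : ∀ l : Λ, G l × M) (i : ∀ l : Λ, G l × M → G l × M),
      (MCQData.mk (MCQData.quadMul D f₃ f₄ M) o i (MCQData.quadOp D f₁ f₂ M) :
        MCQData Λ fun l => G l × M).IsMCQ := by
  obtain ⟨⟨hassoc, honem, hmone, hinvm, hminv⟩, hconj, hopone, hopmul, hdist, hcomp⟩ := hD
  obtain ⟨⟨h0i, h0ii, h0iii, h0iv⟩, h1i, h1ii, h2i, h2ii, h2iii, h2iv, h3i, h3ii, h3iii,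
    h4i, h4ii, h4iii⟩ := hc
  have hcomm : ∀ {u v : R}, IsUnit u → u * v = 1 → v * u = 1 := by
    intro u v hu h
    obtain ⟨w, rfl⟩ := hu
    have hv : v = (↑w⁻¹ : R) := (left_inv_eq_right_inv w.inv_mul h).symm
    rw [hv]; exact w.inv_mul
  have hf3one : ∀ (l : Λ) (a : G l), f₃ l a (D.one l) = 1 := by
    intro l a
    have h := h0ii l a (D.one l) (D.one l)
    rw [hmone, hmone] at h
    exact (h0i l a (D.one l)).1.mul_left_cancel (by rw [mul_one, h])
  have hf4one : ∀ (l : Λ) (a : G l), f₄ l (D.one l) a = 1 := by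
    intro l a
    have h := h0iv l (D.one l) (D.one l) a
    rw [honem, honem] at h
    exact ((h0i l (D.one l) a).2.mul_left_cancel (by rw [mul_one, ← h]))
  have hkey1 : ∀ (l : Λ) (a : G l),
      f₃ l (D.inv l a) a * (f₄ l (D.inv l a) (D.one l) * f₃ l a (D.inv l a)) =
        f₄ l (D.inv l a) a := by
    intro l a
    have h1 := h0iii l (D.inv l a) a (D.inv l a)
    rw [hinvm, hminv] at h1
    have h2 := h0ii l (D.inv l a) a (D.inv l a)
    rw [hinvm, hminv, hf3one] at h2
    have h3 : f₃ l (D.inv l a) a * f₃ l (D.one l) (D.inv l a) = 1 :=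
      hcomm (h0i l (D.one l) (D.inv l a)).1 h2
    rw [← h1, ← mul_assoc, h3, one_mul]
  have hkey2 : ∀ (l : Λ) (a : G l),
      f₄ l a (D.inv l a) * f₄ l (D.inv l a) (D.one l) = 1 := by
    intro l a
    have h := h0iv l a (D.inv l a) (D.one l)
    rw [hminv, hmone, hf4one] at h
    exact h.symm
  refine ⟨fun l => (D.one l, 0),
    fun l p => (D.inv l p.1,
      -((f₄ l (D.inv l p.1) (D.one l) * f₃ l p.1 (D.inv l p.1)) • p.2)),
    ⟨?_, ?_, ?_, ?_, ?_⟩, ?_, ?_, ?_, ?_, ?_⟩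
  · -- associativity
    intro l a b c
    simp only [MCQData.quadMul, Prod.mk.injEq, smul_add, smul_smul]
    refine ⟨hassoc l a.1 b.1 c.1, ?_⟩
    rw [h0ii, h0iii, h0iv]
    abel
  · -- one_mul
    intro l a
    simp only [MCQData.quadMul, honem, hf4one, one_smul, smul_zero, zero_add]
  · -- mul_one
    intro l a
    simp only [MCQData.quadMul, hmone, hf3one, one_smul, smul_zero, add_zero]
  · -- inv_mul
    intro l a
    simp only [MCQData.quadMul, smul_neg, smul_smul, hkey1, hinvm, neg_add_cancel]
  · -- mul_inv
    intro l a
    simp only [MCQData.quadMul, smul_neg, smul_smul, hminv, ← mul_assoc, hkey2, one_mul,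
      add_neg_cancel]
  · -- conjugation
    intro l p q
    simp only [MCQData.quadOp, MCQData.quadMul]
    rw [hconj l p.1 q.1]
    simp only [Sigma.mk.inj_iff, heq_eq_eq, Prod.mk.injEq, true_and]
    rw [h1i l p.1 q.1, h1ii l p.1 q.1]
    simp only [smul_add, smul_neg, smul_smul, add_smul, neg_smul]
    rw [h0iv l (D.inv l q.1) p.1 q.1, ← h0iii l (D.inv l q.1) p.1 q.1,
      ← mul_assoc (f₃ l (D.mul l (D.inv l q.1) p.1) q.1), h0ii l (D.inv l q.1) p.1 q.1,
      mul_assoc (f₃ l (D.inv l q.1) (D.mul l p.1 q.1))]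
    abel
  · -- op one
    intro z l
    simp only [MCQData.quadOp]
    rw [hopone ⟨z.1, z.2.1⟩ l, h2i]
    simp only [one_smul, smul_zero, add_zero]
  · -- op mul
    intro z l a b
    simp only [MCQData.quadOp, MCQData.quadMul, Sigma.eta]
    rw [hopmul ⟨z.1, z.2.1⟩ l a.1 b.1]
    simp only [Sigma.mk.inj_iff, heq_eq_eq, Prod.mk.injEq, true_and]
    rw [h2ii ⟨z.1, z.2.1⟩ l a.1 b.1]
    simp only [smul_add, smul_smul]
    rw [h2iii ⟨z.1, z.2.1⟩ l a.1 b.1, h2iv ⟨z.1, z.2.1⟩ l a.1 b.1]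
    abel
  · -- distributivity
    intro x y z
    simp only [MCQData.quadOp, Sigma.eta]
    rw [hdist ⟨x.1, x.2.1⟩ ⟨y.1, y.2.1⟩ ⟨z.1, z.2.1⟩]
    simp only [Sigma.mk.inj_iff, heq_eq_eq, Prod.mk.injEq, true_and]
    simp only [smul_add, smul_smul]
    rw [h3iii ⟨x.1, x.2.1⟩ ⟨y.1, y.2.1⟩ ⟨z.1, z.2.1⟩, h3i ⟨x.1, x.2.1⟩ ⟨y.1, y.2.1⟩ ⟨z.1, z.2.1⟩,
      h3ii ⟨x.1, x.2.1⟩ ⟨y.1, y.2.1⟩ ⟨z.1, z.2.1⟩]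
    simp only [add_smul]
    abel
  · -- components
    intro l a b x
    obtain ⟨m, a0, b0, ha, hb, hab⟩ := hcomp l a.1 b.1 ⟨x.1, x.2.1⟩
    refine ⟨m, (a0, f₁ ⟨l, a.1⟩ ⟨x.1, x.2.1⟩ • a.2 + f₂ ⟨l, a.1⟩ ⟨x.1, x.2.1⟩ • x.2.2),
      (b0, f₁ ⟨l, b.1⟩ ⟨x.1, x.2.1⟩ • b.2 + f₂ ⟨l, b.1⟩ ⟨x.1, x.2.1⟩ • x.2.2), ?_, ?_, ?_⟩
    · simp only [MCQData.quadOp]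
      rw [ha]
    · simp only [MCQData.quadOp]
      rw [hb]
    · simp only [MCQData.quadOp, MCQData.quadMul]
      rw [hab]
      simp only [Sigma.mk.inj_iff, heq_eq_eq, Prod.mk.injEq, true_and]
      simp only [smul_add, smul_smul]
      rw [h4i l a.1 b.1 ⟨x.1, x.2.1⟩ m a0 b0 ha hb, h4ii l a.1 b.1 ⟨x.1, x.2.1⟩ m a0 b0 ha hb,
        h4iii l a.1 b.1 ⟨x.1, x.2.1⟩ m a0 b0 ha hb]
      simp only [add_smul, smul_smul]
      abel
end
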